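/- arXiv:2104.00552 — 4 statements merged into one kernel-verified Lean document; each statement's English description precedes it below -/
import Mathlib

section
/- For all integers n ≥ 1 and p ≥ 0, (Σ_{i=0}^{p+1} C(p+1,i) B_{n+i}) · (Σ_{i=0}^{p} C(p,i) B_{n+i}) < (Σ_{i=0}^{p+1} C(p+1,i) B_{n+i−1}) · (Σ_{i=0}^{p} C(p,i) B_{n+i+1}), where C(m,i) is the binomial coefficient and B_k is the k-th Bell number. -/
open Finset SimpleGraph

/-- A coloring partition of `G`: a partition of the vertex set into (nonempty)
independent (stable) sets. -/
def IsStablePartition {V : Type*} [Fintype V] [DecidableEq V] (G : SimpleGraph V)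
    (P : Finpartition (univ : Finset V)) : Prop :=
  ∀ t ∈ P.parts, ∀ u ∈ t, ∀ v ∈ t, ¬ G.Adj u v

open scoped Classical in
/-- `colB G` : the number of coloring partitions of `G`. -/
noncomputable def colB {V : Type*} [Fintype V] [DecidableEq V] (G : SimpleGraph V) : ℕ :=
  (univ.filter (IsStablePartition G)).card

open scoped Classical in
/-- `colT G` : the total number of blocks summed over all coloring partitions of `G`. -/
noncomputable def colT {V : Type*} [Fintype V] [DecidableEq V] (G : SimpleGraph V) : ℕ :=
  ∑ P ∈ univ.filter (IsStablePartition G), P.parts.card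

/-- `colA G = colT G / colB G` : the average number of blocks. -/
noncomputable def colA {V : Type*} [Fintype V] [DecidableEq V] (G : SimpleGraph V) : ℚ :=
  (colT G : ℚ) / (colB G : ℚ)

/-- The `n`-th Bell number: the number of partitions of an `n`-element set. -/
noncomputable def bell (n : ℕ) : ℕ :=
  Fintype.card (Finpartition (univ : Finset (Fin n)))

/-- The disjoint union of `G` with `p` isolated vertices (`G ∪ pK₁`). -/
def unionIsolated {V : Type*} (G : SimpleGraph V) (p : ℕ) : SimpleGraph (V ⊕ Fin p) :=
  SimpleGraph.fromRel (fun x y => ∃ a b, x = Sum.inl a ∧ y = Sum.inl b ∧ G.Adj a b)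

/-- `Hgraph n r` : the graph obtained from the disjoint union of the cycle `C_n` and the
path `P_r` by adding an edge between one endpoint of the path (vertex `0`) and one vertex
of the cycle (vertex `0`). -/
def Hgraph (n r : ℕ) : SimpleGraph (Fin n ⊕ Fin r) :=
  SimpleGraph.fromRel (fun x y =>
    (∃ a b, x = Sum.inl a ∧ y = Sum.inl b ∧ (cycleGraph n).Adj a b) ∨
    (∃ a b, x = Sum.inr a ∧ y = Sum.inr b ∧ (pathGraph r).Adj a b) ∨
    (∃ (a : Fin n) (b : Fin r), a.val = 0 ∧ b.val = 0 ∧ x = Sum.inl a ∧ y = Sum.inr b))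


namespace BellAux

variable {α β : Type*} [DecidableEq α] [DecidableEq β]

lemma image_symm_image (e : α ≃ β) (t : Finset α) : (t.image e).image e.symm = t := by
  rw [Finset.image_image]
  simp

/-- Transport a finpartition of `univ` along an equiv of types. -/
def pmap [Fintype α] [Fintype β] (e : α ≃ β) (P : Finpartition (univ : Finset α)) :
    Finpartition (univ : Finset β) where
  parts := P.parts.image (Finset.image e)
  supIndep := by
    rw [Finset.supIndep_iff_pairwiseDisjoint]
    simp only [Finset.coe_image]
    rintro _ ⟨a, ha, rfl⟩ _ ⟨b, hb, rfl⟩ hne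
    have hab : a ≠ b := by rintro rfl; exact hne rfl
    exact (Finset.disjoint_image e.injective).2 (P.disjoint ha hb hab)
  sup_parts := by
    ext x
    rw [Finset.sup_image, Function.id_comp]
    simp only [Finset.mem_univ, iff_true, Finset.mem_sup]
    obtain ⟨t, ht, hx⟩ := P.exists_mem (Finset.mem_univ (e.symm x))
    exact ⟨t, ht, Finset.mem_image.2 ⟨e.symm x, hx, e.apply_symm_apply x⟩⟩
  bot_notMem := by
    simp only [Finset.bot_eq_empty, Finset.mem_image]
    rintro ⟨a, ha, h⟩
    exact P.bot_notMem (by simpa [Finset.image_eq_empty.1 h] using ha)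

lemma pmap_pmap [Fintype α] [Fintype β] (e : α ≃ β) (P : Finpartition (univ : Finset α)) :
    pmap e.symm (pmap e P) = P := by
  ext t
  constructor
  · intro ht
    simp only [pmap, Finset.mem_image] at ht
    obtain ⟨u, hu, rfl⟩ := ht
    obtain ⟨v, hv, rfl⟩ := hu
    rwa [image_symm_image]
  · intro ht
    simp only [pmap, Finset.mem_image]
    exact ⟨t.image e, ⟨t, ht, rfl⟩, image_symm_image e t⟩

def equivCongr [Fintype α] [Fintype β] (e : α ≃ β) :
    Finpartition (univ : Finset α) ≃ Finpartition (univ : Finset β) where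
  toFun := pmap e
  invFun := pmap e.symm
  left_inv P := pmap_pmap e P
  right_inv P := by simpa using pmap_pmap e.symm P

/-- Finpartitions of a finset `t` correspond to finpartitions of `univ` of the subtype. -/
def toSub (t : Finset α) (P : Finpartition t) : Finpartition (univ : Finset {x // x ∈ t}) where
  parts := P.parts.image (fun p => p.subtype (· ∈ t))
  supIndep := by
    rw [Finset.supIndep_iff_pairwiseDisjoint]
    simp only [Finset.coe_image]
    rintro _ ⟨a, ha, rfl⟩ _ ⟨b, hb, rfl⟩ hne
    have hab : a ≠ b := by rintro rfl; exact hne rfl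
    have := P.disjoint ha hb hab
    simp only [Function.onFun, id_eq] at this ⊢
    rw [Finset.disjoint_left] at this ⊢
    intro x hx hx'
    rw [Finset.mem_subtype] at hx hx'
    exact this hx hx'
  sup_parts := by
    ext x
    rw [Finset.sup_image, Function.id_comp]
    simp only [Finset.mem_univ, iff_true, Finset.mem_sup]
    obtain ⟨u, hu, hx⟩ := P.exists_mem x.2
    exact ⟨u, hu, Finset.mem_subtype.2 hx⟩
  bot_notMem := by
    simp only [Finset.bot_eq_empty, Finset.mem_image]
    rintro ⟨a, ha, h⟩
    obtain ⟨x, hx⟩ := P.nonempty_of_mem_parts ha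
    have hxt : x ∈ t := P.le ha hx
    have : (⟨x, hxt⟩ : {x // x ∈ t}) ∈ a.subtype (· ∈ t) := Finset.mem_subtype.2 hx
    rw [h] at this
    exact absurd this (Finset.notMem_empty _)

def ofSub (t : Finset α) (Q : Finpartition (univ : Finset {x // x ∈ t})) : Finpartition t where
  parts := Q.parts.image (Finset.map (Function.Embedding.subtype (· ∈ t)))
  supIndep := by
    rw [Finset.supIndep_iff_pairwiseDisjoint]
    simp only [Finset.coe_image]
    rintro _ ⟨a, ha, rfl⟩ _ ⟨b, hb, rfl⟩ hne
    have hab : a ≠ b := by rintro rfl; exact hne rfl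
    have := Q.disjoint ha hb hab
    simp only [Function.onFun, id_eq] at this ⊢
    rw [Finset.disjoint_left] at this ⊢
    rintro x hx hx'
    rw [Finset.mem_map] at hx hx'
    obtain ⟨y, hy, rfl⟩ := hx
    obtain ⟨z, hz, hzy⟩ := hx'
    have hzyy : z = y := Subtype.ext hzy
    exact this hy (hzyy ▸ hz)
  sup_parts := by
    ext x
    rw [Finset.sup_image, Function.id_comp]
    simp only [Finset.mem_sup, Finset.mem_map, Function.Embedding.coe_subtype]
    constructor
    · rintro ⟨v, hv, y, hy, rfl⟩; exact y.2
    · intro hx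
      obtain ⟨u, hu, hmem⟩ := Q.exists_mem (Finset.mem_univ (⟨x, hx⟩ : {x // x ∈ t}))
      exact ⟨u, hu, ⟨x, hx⟩, hmem, rfl⟩
  bot_notMem := by
    simp only [Finset.bot_eq_empty, Finset.mem_image]
    rintro ⟨a, ha, h⟩
    obtain ⟨x, hx⟩ := Q.nonempty_of_mem_parts ha
    have : (x : α) ∈ a.map (Function.Embedding.subtype (· ∈ t)) :=
      Finset.mem_map.2 ⟨x, hx, rfl⟩
    rw [h] at this
    exact absurd this (Finset.notMem_empty _)

lemma sub_round (t : Finset α) (p : Finset α) (hp : p ⊆ t) :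
    (p.subtype (· ∈ t)).map (Function.Embedding.subtype (· ∈ t)) = p := by
  rw [Finset.subtype_map, Finset.filter_true_of_mem fun x hx => hp hx]

lemma sub_round' (t : Finset α) (q : Finset {x // x ∈ t}) :
    (q.map (Function.Embedding.subtype (· ∈ t))).subtype (· ∈ t) = q := by
  ext ⟨x, hx⟩
  simp only [Finset.mem_subtype, Finset.mem_map, Function.Embedding.coe_subtype]
  constructor
  · rintro ⟨⟨y, hy⟩, hyq, h⟩
    cases h
    exact hyq
  · intro h
    exact ⟨⟨x, hx⟩, h, rfl⟩

def equivSub (t : Finset α) : Finpartition t ≃ Finpartition (univ : Finset {x // x ∈ t}) where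
  toFun := toSub t
  invFun := ofSub t
  left_inv P := by
    ext p
    simp only [ofSub, toSub, Finset.mem_image, exists_exists_and_eq_and]
    constructor
    · rintro ⟨a, ha, rfl⟩
      rwa [sub_round t a (P.le ha)]
    · intro hp
      exact ⟨p, hp, sub_round t p (P.le hp)⟩
  right_inv Q := by
    ext q
    simp only [toSub, ofSub, Finset.mem_image, exists_exists_and_eq_and]
    constructor
    · rintro ⟨a, ha, rfl⟩
      rwa [sub_round' t a]
    · intro hq
      exact ⟨q, hq, sub_round' t q⟩

/-- The number of finpartitions of any finset is the bell number of its cardinality. -/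
lemma card_finpartition_eq_bell (t : Finset α) :
    Fintype.card (Finpartition t) = bell t.card := by
  have e1 : {x // x ∈ t} ≃ Fin t.card := t.equivFin
  calc Fintype.card (Finpartition t)
      = Fintype.card (Finpartition (univ : Finset {x // x ∈ t})) :=
        Fintype.card_congr (equivSub t)
    _ = Fintype.card (Finpartition (univ : Finset (Fin t.card))) :=
        Fintype.card_congr (equivCongr e1)
    _ = bell t.card := rfl

section Rec

variable {n : ℕ}

lemma fiber_card (s : Finset (Fin (n + 1))) (hs : (0 : Fin (n + 1)) ∈ s) :
    ((univ : Finset (Finpartition (univ : Finset (Fin (n + 1))))).filter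
        (fun P => P.part 0 = s)).card
      = bell ((univ \ s : Finset (Fin (n + 1))).card) := by
  classical
  have hs_ne : s ≠ ⊥ := by
    intro h
    rw [h] at hs
    exact absurd hs (Finset.notMem_empty _)
  have hdisj : Disjoint ((univ : Finset (Fin (n+1))) \ s) s := sdiff_disjoint
  have hsup : ((univ : Finset (Fin (n+1))) \ s) ⊔ s = univ := sdiff_sup_cancel (le_top)
  rw [← card_finpartition_eq_bell ((univ : Finset (Fin (n+1))) \ s)]
  rw [Fintype.card, eq_comm]
  refine Finset.card_bij' (fun Q _ => Q.extend hs_ne hdisj hsup)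
    (fun P _ => P.avoid s) ?_ ?_ ?_ ?_
  · intro Q _
    rw [Finset.mem_filter]
    refine ⟨Finset.mem_univ _, ?_⟩
    exact Finpartition.part_eq_of_mem _ (Finset.mem_insert_self _ _) hs
  · intro P _
    exact Finset.mem_univ _
  · -- avoid (extend Q) = Q
    intro Q _
    ext u
    rw [Finpartition.mem_avoid]
    constructor
    · rintro ⟨d, hd, hds, rfl⟩
      rcases Finset.mem_insert.1 hd with rfl | hd'
      · exact absurd le_rfl hds
      · have hdle : d ≤ univ \ s := Q.le hd'
        have : Disjoint d s := hdisj.mono_left hdle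
        rwa [Finset.sdiff_eq_self_iff_disjoint.2 this]
    · intro hu
      refine ⟨u, Finset.mem_insert_of_mem hu, ?_, ?_⟩
      · intro hle
        have hdle : u ≤ univ \ s := Q.le hu
        have hdisj' : Disjoint u s := hdisj.mono_left hdle
        have : u = ⊥ := disjoint_self.1 (hdisj'.mono_right hle)
        exact Q.bot_notMem (this ▸ hu)
      · exact Finset.sdiff_eq_self_iff_disjoint.2 (hdisj.mono_left (Q.le hu))
  · -- extend (avoid P) = P
    intro P hP
    rw [Finset.mem_filter] at hP
    have hsP : s ∈ P.parts := hP.2 ▸ P.part_mem.2 (Finset.mem_univ _)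
    ext u
    rw [Finpartition.extend_parts, Finset.mem_insert, Finpartition.mem_avoid]
    constructor
    · rintro (rfl | ⟨d, hd, hds, rfl⟩)
      · exact hsP
      · have hne : d ≠ s := by rintro rfl; exact hds le_rfl
        have : Disjoint d s := P.disjoint hd hsP hne
        rwa [Finset.sdiff_eq_self_iff_disjoint.2 this]
    · intro hu
      by_cases hus : u = s
      · exact Or.inl hus
      · refine Or.inr ⟨u, hu, ?_, ?_⟩
        · intro hle
          have hdisj' : Disjoint u s := P.disjoint hu hsP hus
          have : u = ⊥ := disjoint_self.1 (hdisj'.mono_right hle)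
          exact P.bot_notMem (this ▸ hu)
        · exact Finset.sdiff_eq_self_iff_disjoint.2 (P.disjoint hu hsP hus)

lemma bell_rec (n : ℕ) :
    bell (n + 1) = ∑ k ∈ Finset.range (n + 1), n.choose k * bell k := by
  classical
  have h0 : bell (n + 1)
      = ∑ s ∈ (univ : Finset (Finset (Fin (n+1)))).filter (fun s => (0 : Fin (n+1)) ∈ s),
          ((univ : Finset (Finpartition (univ : Finset (Fin (n + 1))))).filter
            (fun P => P.part 0 = s)).card := by
    rw [show bell (n+1) = Fintype.card (Finpartition (univ : Finset (Fin (n+1)))) from rfl,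
      Fintype.card]
    refine Finset.card_eq_sum_card_fiberwise ?_
    intro P _
    rw [Finset.mem_coe, Finset.mem_filter]
    exact ⟨Finset.mem_univ _, P.mem_part (Finset.mem_univ _)⟩
  rw [h0]
  have h1 : ∀ s ∈ (univ : Finset (Finset (Fin (n+1)))).filter (fun s => (0 : Fin (n+1)) ∈ s),
      ((univ : Finset (Finpartition (univ : Finset (Fin (n + 1))))).filter
            (fun P => P.part 0 = s)).card = bell (n + 1 - s.card) := by
    intro s hs
    rw [Finset.mem_filter] at hs
    rw [fiber_card s hs.2, Finset.card_sdiff_of_subset (Finset.subset_univ s), Finset.card_univ,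
      Fintype.card_fin]
  rw [Finset.sum_congr rfl h1]
  -- reindex over subsets of univ.erase 0
  have h2 : ∑ s ∈ (univ : Finset (Finset (Fin (n+1)))).filter (fun s => (0 : Fin (n+1)) ∈ s),
      bell (n + 1 - s.card)
      = ∑ t ∈ ((univ : Finset (Fin (n+1))).erase 0).powerset, bell (n - t.card) := by
    refine Finset.sum_nbij' (fun s => s.erase 0) (fun t => insert 0 t) ?_ ?_ ?_ ?_ ?_
    · intro s _
      rw [Finset.mem_powerset]
      exact Finset.erase_subset_erase _ (Finset.subset_univ s)
    · intro t _
      rw [Finset.mem_filter]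
      exact ⟨Finset.mem_univ _, Finset.mem_insert_self _ _⟩
    · intro s hs
      rw [Finset.mem_filter] at hs
      exact Finset.insert_erase hs.2
    · intro t ht
      rw [Finset.mem_powerset] at ht
      have : (0 : Fin (n+1)) ∉ t := fun h => (Finset.mem_erase.1 (ht h)).1 rfl
      exact Finset.erase_insert this
    · intro s hs
      rw [Finset.mem_filter] at hs
      have h1s : 1 ≤ s.card := Finset.card_pos.2 ⟨0, hs.2⟩
      rw [Finset.card_erase_of_mem hs.2]
      congr 1
      omega
  rw [h2, Finset.sum_powerset]
  have hcard : ((univ : Finset (Fin (n+1))).erase 0).card = n := by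
    rw [Finset.card_erase_of_mem (Finset.mem_univ _), Finset.card_univ, Fintype.card_fin]; omega
  rw [hcard]
  have h3 : ∀ j ∈ Finset.range (n + 1),
      (∑ t ∈ Finset.powersetCard j ((univ : Finset (Fin (n+1))).erase 0), bell (n - t.card))
        = n.choose j * bell (n - j) := by
    intro j hj
    have : ∀ t ∈ Finset.powersetCard j ((univ : Finset (Fin (n+1))).erase 0),
        bell (n - t.card) = bell (n - j) := by
      intro t ht
      rw [(Finset.mem_powersetCard.1 ht).2]
    rw [Finset.sum_congr rfl this, Finset.sum_const, Finset.card_powersetCard, hcard,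
      smul_eq_mul]
  rw [Finset.sum_congr rfl h3]
  -- reflect the sum
  have h4 := Finset.sum_range_reflect (fun k => n.choose k * bell k) (n + 1)
  simp only [Nat.add_sub_cancel] at h4
  rw [← h4]
  refine Finset.sum_congr rfl ?_
  intro k hk
  rw [Finset.mem_range] at hk
  have hkn : k ≤ n := by omega
  rw [Nat.choose_symm hkn]

end Rec

lemma bell_zero : bell 0 = 1 := by
  rw [bell, show (univ : Finset (Fin 0)) = ⊥ from rfl]
  exact Fintype.card_unique

lemma bell_pos (n : ℕ) : 0 < bell n := by
  rw [bell]
  have : Nonempty (Finpartition (univ : Finset (Fin n))) := ⟨⊥⟩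
  exact Fintype.card_pos

lemma bell_one : bell 1 = 1 := by
  have := bell_rec 0
  simpa [bell_zero] using this

lemma bell_two : bell 2 = 2 := by
  have := bell_rec 1
  rw [Finset.sum_range_succ, Finset.sum_range_one] at this
  simp [bell_zero, bell_one] at this
  omega

/-- The binomially shifted Bell sums. -/
noncomputable def S (p m : ℕ) : ℕ := ∑ i ∈ Finset.range (p + 1), p.choose i * bell (m + i)

lemma S_zero (m : ℕ) : S m 0 = bell (m + 1) := by
  rw [bell_rec m, S]
  refine Finset.sum_congr rfl fun i _ => ?_
  rw [Nat.zero_add]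

lemma S_pascal (p m : ℕ) : S (p + 1) m = S p m + S p (m + 1) := by
  have e0 : S (p + 1) m
      = (∑ i ∈ Finset.range (p + 1), (p + 1).choose (i + 1) * bell (m + (i + 1))) + bell m := by
    rw [S, Finset.sum_range_succ']
    simp
  have e1 : ∀ i ∈ Finset.range (p + 1), (p + 1).choose (i + 1) * bell (m + (i + 1))
      = p.choose i * bell (m + 1 + i) + p.choose (i + 1) * bell (m + (i + 1)) := by
    intro i _
    rw [Nat.choose_succ_succ, add_mul, show m + (i + 1) = m + 1 + i from by omega]
  have e3 : (∑ i ∈ Finset.range (p + 1), p.choose (i + 1) * bell (m + (i + 1))) + bell m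
      = S p m := by
    rw [Finset.sum_range_succ, Nat.choose_succ_self, zero_mul, add_zero, S,
      Finset.sum_range_succ']
    simp
  have e2 : (∑ i ∈ Finset.range (p + 1), p.choose i * bell (m + 1 + i)) = S p (m + 1) := rfl
  rw [e0, Finset.sum_congr rfl e1, Finset.sum_add_distrib]
  omega

lemma amgm (x y P : ℕ) (h1 : P ≤ x) (h2 : P * P ≤ x * y) : 2 * P ≤ x + y := by
  rcases Nat.eq_zero_or_pos x with hx | hx
  · subst hx
    omega
  · zify at h1 h2 ⊢
    nlinarith [sq_nonneg ((x : ℤ) - P), h1, h2]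

lemma core_ineq (n p : ℕ)
    (hRM : ∀ a b : ℕ, a ≤ b → b ≤ n + p + 1 → bell (a + 1) * bell b ≤ bell a * bell (b + 1))
    (hLC : ∀ m : ℕ, m ≤ n + p → bell (m + 1) * bell (m + 1) ≤ bell m * bell (m + 2))
    (i j : ℕ) (hij : i ≤ j) (hjp : j ≤ p) :
    2 * (bell (n + 1 + i) * bell (n + 1 + j))
      ≤ bell (n + i) * bell (n + 2 + j) + bell (n + j) * bell (n + 2 + i) := by
  apply amgm
  · have h := hRM (n + i) (n + 1 + j) (by omega) (by omega)
    calc bell (n + 1 + i) * bell (n + 1 + j)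
        = bell (n + i + 1) * bell (n + 1 + j) := by rw [show n + 1 + i = n + i + 1 from by omega]
      _ ≤ bell (n + i) * bell (n + 1 + j + 1) := h
      _ = bell (n + i) * bell (n + 2 + j) := by rw [show n + 1 + j + 1 = n + 2 + j from by omega]
  · have h1 := hLC (n + i) (by omega)
    have h2 := hLC (n + j) (by omega)
    calc bell (n + 1 + i) * bell (n + 1 + j) * (bell (n + 1 + i) * bell (n + 1 + j))
        = (bell (n + i + 1) * bell (n + i + 1)) * (bell (n + j + 1) * bell (n + j + 1)) := by
          rw [show n + 1 + i = n + i + 1 from by omega, show n + 1 + j = n + j + 1 from by omega]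
          ring
      _ ≤ (bell (n + i) * bell (n + i + 2)) * (bell (n + j) * bell (n + j + 2)) :=
          Nat.mul_le_mul h1 h2
      _ = bell (n + i) * bell (n + 2 + j) * (bell (n + j) * bell (n + 2 + i)) := by
          rw [show n + i + 2 = n + 2 + i from by omega, show n + j + 2 = n + 2 + j from by omega]
          ring

lemma CS (p n : ℕ)
    (hRM : ∀ a b : ℕ, a ≤ b → b ≤ n + p + 1 → bell (a + 1) * bell b ≤ bell a * bell (b + 1))
    (hLC : ∀ m : ℕ, m ≤ n + p → bell (m + 1) * bell (m + 1) ≤ bell m * bell (m + 2))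
    (hstrict : bell (n + 1) * bell (n + 1) + 1 ≤ bell n * bell (n + 2)) :
    S p (n + 1) * S p (n + 1) + 1 ≤ S p n * S p (n + 2) := by
  classical
  set r := Finset.range (p + 1) with hr
  have hh : ∀ X Y : ℕ → ℕ,
      (∑ q ∈ r ×ˢ r, (p.choose q.1 * X q.1) * (p.choose q.2 * Y q.2))
        = (∑ i ∈ r, p.choose i * X i) * (∑ j ∈ r, p.choose j * Y j) := by
    intro X Y
    rw [Finset.sum_mul_sum]
    exact Finset.sum_product' r r fun a b => p.choose a * X a * (p.choose b * Y b)
  have key : (∑ q ∈ r ×ˢ r,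
        2 * (p.choose q.1 * p.choose q.2 * (bell (n + 1 + q.1) * bell (n + 1 + q.2))))
      < ∑ q ∈ r ×ˢ r, (p.choose q.1 * p.choose q.2 *
          (bell (n + q.1) * bell (n + 2 + q.2) + bell (n + q.2) * bell (n + 2 + q.1))) := by
    refine Finset.sum_lt_sum ?_ ⟨(0, 0), ?_, ?_⟩
    · rintro ⟨i, j⟩ hq
      simp only [Finset.mem_product, hr, Finset.mem_range] at hq
      have core : 2 * (bell (n + 1 + i) * bell (n + 1 + j))
          ≤ bell (n + i) * bell (n + 2 + j) + bell (n + j) * bell (n + 2 + i) := by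
        rcases le_total i j with h | h
        · exact core_ineq n p hRM hLC i j h (by omega)
        · have h2 := core_ineq n p hRM hLC j i h (by omega)
          calc 2 * (bell (n + 1 + i) * bell (n + 1 + j))
              = 2 * (bell (n + 1 + j) * bell (n + 1 + i)) := by ring
            _ ≤ bell (n + j) * bell (n + 2 + i) + bell (n + i) * bell (n + 2 + j) := h2
            _ = _ := by ring
      calc 2 * (p.choose i * p.choose j * (bell (n + 1 + i) * bell (n + 1 + j)))
          = p.choose i * p.choose j * (2 * (bell (n + 1 + i) * bell (n + 1 + j))) := by ring
        _ ≤ _ := Nat.mul_le_mul_left _ core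
    · simp [hr]
    · simp only [Nat.choose_zero_right, one_mul, Nat.add_zero]
      omega
  have eL : (∑ q ∈ r ×ˢ r,
        2 * (p.choose q.1 * p.choose q.2 * (bell (n + 1 + q.1) * bell (n + 1 + q.2))))
      = 2 * (S p (n + 1) * S p (n + 1)) := by
    rw [← Finset.mul_sum]
    congr 1
    rw [show (∑ q ∈ r ×ˢ r,
          p.choose q.1 * p.choose q.2 * (bell (n + 1 + q.1) * bell (n + 1 + q.2)))
        = ∑ q ∈ r ×ˢ r, (p.choose q.1 * bell (n + 1 + q.1)) * (p.choose q.2 * bell (n + 1 + q.2))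
        from Finset.sum_congr rfl fun q _ => by ring]
    exact hh (fun k => bell (n + 1 + k)) (fun k => bell (n + 1 + k))
  have eR : (∑ q ∈ r ×ˢ r, (p.choose q.1 * p.choose q.2 *
          (bell (n + q.1) * bell (n + 2 + q.2) + bell (n + q.2) * bell (n + 2 + q.1))))
      = S p n * S p (n + 2) + S p n * S p (n + 2) := by
    rw [show (∑ q ∈ r ×ˢ r, (p.choose q.1 * p.choose q.2 *
          (bell (n + q.1) * bell (n + 2 + q.2) + bell (n + q.2) * bell (n + 2 + q.1))))
        = ∑ q ∈ r ×ˢ r, ((p.choose q.1 * bell (n + q.1)) * (p.choose q.2 * bell (n + 2 + q.2))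
            + (p.choose q.1 * bell (n + 2 + q.1)) * (p.choose q.2 * bell (n + q.2)))
        from Finset.sum_congr rfl fun q _ => by ring]
    rw [Finset.sum_add_distrib]
    have A1 : (∑ q ∈ r ×ˢ r, p.choose q.1 * bell (n + q.1) * (p.choose q.2 * bell (n + 2 + q.2)))
        = S p n * S p (n + 2) := hh (fun k => bell (n + k)) (fun k => bell (n + 2 + k))
    have A2 : (∑ q ∈ r ×ˢ r, p.choose q.1 * bell (n + 2 + q.1) * (p.choose q.2 * bell (n + q.2)))
        = S p n * S p (n + 2) :=
      (hh (fun k => bell (n + 2 + k)) (fun k => bell (n + k))).trans (mul_comm _ _)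
    rw [A1, A2]
  rw [eL, eR] at key
  omega

lemma RM_of (m : ℕ)
    (h : ∀ k, k < m → bell (k + 1) * bell (k + 1) + 1 ≤ bell k * bell (k + 2)) :
    ∀ b a : ℕ, a ≤ b → b ≤ m → bell (a + 1) * bell b ≤ bell a * bell (b + 1) := by
  intro b
  induction b with
  | zero =>
    intro a ha _
    interval_cases a
    rw [bell_zero, bell_one]
  | succ b ih =>
    intro a ha hb
    rcases Nat.lt_or_ge a (b + 1) with h' | h'
    · have hab : a ≤ b := by omega
      have h1 := ih a hab (by omega)
      have h2 : bell (b + 1) * bell (b + 1) ≤ bell b * bell (b + 2) :=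
        le_trans (Nat.le_succ _) (h b (by omega))
      have hpos : 0 < bell b * bell (b + 1) := Nat.mul_pos (bell_pos b) (bell_pos (b + 1))
      have key : (bell (a + 1) * bell (b + 1)) * (bell b * bell (b + 1))
          ≤ (bell a * bell (b + 2)) * (bell b * bell (b + 1)) := by
        calc (bell (a + 1) * bell (b + 1)) * (bell b * bell (b + 1))
            = (bell (a + 1) * bell b) * (bell (b + 1) * bell (b + 1)) := by ring
          _ ≤ (bell a * bell (b + 1)) * (bell b * bell (b + 2)) := Nat.mul_le_mul h1 h2
          _ = (bell a * bell (b + 2)) * (bell b * bell (b + 1)) := by ring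
      exact Nat.le_of_mul_le_mul_right key hpos
    · have : a = b + 1 := by omega
      subst this
      exact le_of_eq (mul_comm _ _)

lemma LC1 : ∀ m : ℕ, bell (m + 1) * bell (m + 1) + 1 ≤ bell m * bell (m + 2) := by
  intro m
  induction m using Nat.strong_induction_on with
  | _ m ih =>
    match m with
    | 0 => rw [bell_zero, bell_one, bell_two]
    | (M + 1) =>
      have hRM := RM_of (M + 1) (fun k hk => ih k (by omega))
      have hcs := CS M 0
        (fun a b hab hb => hRM b a hab (by omega))
        (fun k hk => le_trans (Nat.le_succ _) (ih k (by omega)))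
        (by rw [bell_zero, bell_one, bell_two])
      -- hcs : S M 1 * S M 1 + 1 ≤ S M 0 * S M 2
      have e1 : bell (M + 2) = S M 0 + S M 1 := by
        rw [show M + 2 = M + 1 + 1 from rfl, ← S_zero (M + 1), S_pascal]
      have e2 : bell (M + 3) = S M 0 + S M 1 + (S M 1 + S M 2) := by
        rw [show M + 3 = M + 2 + 1 from rfl, ← S_zero (M + 2),
          show M + 2 = M + 1 + 1 from rfl, S_pascal, S_pascal, S_pascal]
      have e0 : bell (M + 1) = S M 0 := (S_zero M).symm
      rw [show M + 1 + 1 = M + 2 from rfl, show M + 1 + 2 = M + 3 from rfl, e0, e1, e2]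
      nlinarith [hcs]

lemma RM : ∀ a b : ℕ, a ≤ b → bell (a + 1) * bell b ≤ bell a * bell (b + 1) :=
  fun a b hab => RM_of b (fun k _ => LC1 k) b a hab le_rfl

theorem main_ineq (n p : ℕ) (hn : 1 ≤ n) :
    (∑ i ∈ Finset.range (p + 2), (p + 1).choose i * bell (n + i)) *
      (∑ i ∈ Finset.range (p + 1), p.choose i * bell (n + i)) <
    (∑ i ∈ Finset.range (p + 2), (p + 1).choose i * bell (n + i - 1)) *
      (∑ i ∈ Finset.range (p + 1), p.choose i * bell (n + i + 1)) := by
  obtain ⟨m, rfl⟩ : ∃ m, n = m + 1 := ⟨n - 1, by omega⟩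
  have hcs := CS p m
    (fun a b hab hb => RM a b hab)
    (fun k hk => le_trans (Nat.le_succ _) (LC1 k))
    (LC1 m)
  -- identify the four sums
  have E1 : (∑ i ∈ Finset.range (p + 2), (p + 1).choose i * bell (m + 1 + i))
      = S p (m + 1) + S p (m + 2) := by
    rw [← S_pascal]
    rfl
  have E2 : (∑ i ∈ Finset.range (p + 1), p.choose i * bell (m + 1 + i)) = S p (m + 1) := rfl
  have E3 : (∑ i ∈ Finset.range (p + 2), (p + 1).choose i * bell (m + 1 + i - 1))
      = S p m + S p (m + 1) := by
    rw [← S_pascal, S]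
    refine Finset.sum_congr rfl fun i _ => ?_
    rw [show m + 1 + i - 1 = m + i from by omega]
  have E4 : (∑ i ∈ Finset.range (p + 1), p.choose i * bell (m + 1 + i + 1)) = S p (m + 2) := by
    rw [S]
    refine Finset.sum_congr rfl fun i _ => ?_
    rw [show m + 1 + i + 1 = m + 2 + i from by omega]
  rw [E1, E2, E3, E4]
  nlinarith [hcs]

end BellAux

/-- For all `n ≥ 1` and `p ≥ 0`,
`(∑ C(p+1,i) B_{n+i})(∑ C(p,i) B_{n+i}) < (∑ C(p+1,i) B_{n+i-1})(∑ C(p,i) B_{n+i+1})`. -/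
theorem stmt_8 (n p : ℕ) (hn : 1 ≤ n) :
    (∑ i ∈ Finset.range (p + 2), (p + 1).choose i * bell (n + i)) *
      (∑ i ∈ Finset.range (p + 1), p.choose i * bell (n + i)) <
    (∑ i ∈ Finset.range (p + 2), (p + 1).choose i * bell (n + i - 1)) *
      (∑ i ∈ Finset.range (p + 1), p.choose i * bell (n + i + 1)) := by
  exact BellAux.main_ineq n p hn
end

section
/- For all integers n ≥ 1, B_n^2 < B_{n−1} · B_{n+1}; that is, the sequence of Bell numbers is strictly log-convex. -/
open Finset SimpleGraph

section BellLogConvexAux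
open Function


section
variable {α β : Type*} [DecidableEq α] [DecidableEq β]

private lemma sup_map_aux (g : α ↪ β) (s : Finset (Finset α)) :
    (s.sup fun t => t.map g) = (s.sup id).map g := by
  induction s using Finset.cons_induction with
  | empty => simp
  | cons a s ha ih =>
      rw [sup_cons, sup_cons, id_eq, ih, Finset.sup_eq_union, Finset.sup_eq_union,
        Finset.map_union]

/-- Map a finpartition along an embedding. -/
private def mapPart {s : Finset α} (g : α ↪ β) (P : Finpartition s) :
    Finpartition (s.map g) where
  parts := P.parts.map (Finset.mapEmbedding g).toEmbedding
  supIndep := by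
    rw [Finset.supIndep_iff_pairwiseDisjoint]
    rintro x hx y hy hxy
    simp only [coe_map, Set.mem_image, mem_coe, RelEmbedding.coe_toEmbedding,
      Finset.mapEmbedding_apply] at hx hy
    obtain ⟨t, ht, rfl⟩ := hx
    obtain ⟨u, hu, rfl⟩ := hy
    have htu : t ≠ u := by rintro rfl; exact hxy rfl
    exact (Finset.disjoint_map g).2 (P.disjoint ht hu htu)
  sup_parts := by
    rw [Finset.sup_map]
    have h : (id ∘ (Finset.mapEmbedding g).toEmbedding) = fun t : Finset α => t.map g := by
      funext t; exact Finset.mapEmbedding_apply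
    rw [h, sup_map_aux, P.sup_parts]
  bot_notMem := by
    simp only [bot_eq_empty, mem_map, RelEmbedding.coe_toEmbedding, Finset.mapEmbedding_apply]
    rintro ⟨t, ht, h⟩
    rw [Finset.map_eq_empty] at h
    subst h; exact P.bot_notMem ht

@[simp] private lemma mapPart_parts {s : Finset α} (g : α ↪ β) (P : Finpartition s) :
    (mapPart g P).parts = P.parts.map (Finset.mapEmbedding g).toEmbedding := rfl

end

section
variable {α : Type*} [Fintype α] [DecidableEq α]

private abbrev M (α : Type*) : Finset α ↪ Finset (Option α) :=
  (Finset.mapEmbedding Embedding.some).toEmbedding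

/-- Add a new singleton part `{none}`. -/
private def addNonePart (P : Finpartition (univ : Finset α)) :
    Finpartition (univ : Finset (Option α)) :=
  (mapPart Embedding.some P).extend (b := {none}) (c := univ)
    (by simp)
    (by simp [Finset.disjoint_singleton_right])
    (by ext (_ | a) <;> simp)

private lemma addNonePart_parts (P : Finpartition (univ : Finset α)) :
    (addNonePart P).parts = insert {none} (P.parts.map (M α)) := rfl

/-- Insert `none` into the part `t`. -/
private def addToPart (P : Finpartition (univ : Finset α)) (t : Finset α) (ht : t ∈ P.parts) :
    Finpartition (univ : Finset (Option α)) :=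
  have hdt : Disjoint t ((P.parts.erase t).sup id) :=
    P.supIndep (Finset.erase_subset _ _) ht (Finset.notMem_erase _ _)
  have hsup : t ⊔ ((P.parts.erase t).sup id) = univ := by
    have h2 : (insert t (P.parts.erase t)).sup id = univ := by
      rw [Finset.insert_erase ht, P.sup_parts]
    rw [Finset.sup_insert, id_eq] at h2
    exact h2
  ((mapPart Embedding.some P).ofSubset
      (parts := (P.parts.erase t).map (M α))
      (by rw [mapPart_parts]; exact Finset.map_subset_map.2 (Finset.erase_subset _ _)) rfl
    ).extend (b := Finset.insertNone t) (c := univ)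
    (by simp [← Finset.nonempty_iff_ne_empty, Finset.insertNone_nonempty])
    (by
      rw [Finset.disjoint_left]
      intro x hx hx'
      have : ((P.parts.erase t).map (M α)).sup id = ((P.parts.erase t).sup id).map Embedding.some := by
        rw [Finset.sup_map]
        have h : (id ∘ (M α)) = fun u : Finset α => u.map Embedding.some := by
          funext u; exact Finset.mapEmbedding_apply
        rw [h, sup_map_aux]
      rw [this, Finset.mem_map] at hx
      obtain ⟨a, ha, rfl⟩ := hx
      rw [Embedding.some_apply, Finset.some_mem_insertNone] at hx'
      exact Finset.disjoint_right.1 hdt ha hx')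
    (by
      have : ((P.parts.erase t).map (M α)).sup id = ((P.parts.erase t).sup id).map Embedding.some := by
        rw [Finset.sup_map]
        have h : (id ∘ (M α)) = fun u : Finset α => u.map Embedding.some := by
          funext u; exact Finset.mapEmbedding_apply
        rw [h, sup_map_aux]
      rw [this]
      ext (_ | a)
      · simp
      · simp only [Finset.sup_eq_union, Finset.mem_union, Finset.mem_map, mem_univ, iff_true,
          Finset.mem_insertNone]
        have : a ∈ t ∪ ((P.parts.erase t).sup id) := by rw [← Finset.sup_eq_union, hsup]; simp
        rw [Finset.mem_union] at this
        rcases this with h | h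
        · right; simpa using h
        · left; exact ⟨a, h, rfl⟩)

private lemma addToPart_parts (P : Finpartition (univ : Finset α)) (t : Finset α)
    (ht : t ∈ P.parts) :
    (addToPart P t ht).parts = insert (Finset.insertNone t) ((P.parts.erase t).map (M α)) := rfl

end

section
variable {α : Type*} [Fintype α] [DecidableEq α]

/-- Restrict a finpartition of `Option α` to `α`. -/
private def restrictPart (Q : Finpartition (univ : Finset (Option α))) :
    Finpartition (univ : Finset α) where
  parts := (Q.parts.image Finset.eraseNone).erase ∅
  supIndep := by
    rw [Finset.supIndep_iff_pairwiseDisjoint]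
    rintro x hx y hy hxy
    simp only [coe_erase, Set.mem_diff, mem_coe, Finset.mem_image] at hx hy
    obtain ⟨⟨t, ht, rfl⟩, -⟩ := hx
    obtain ⟨⟨u, hu, rfl⟩, -⟩ := hy
    have htu : t ≠ u := by rintro rfl; exact hxy rfl
    have := Q.disjoint ht hu htu
    rw [Function.onFun, id_eq, id_eq, Finset.disjoint_left]
    rw [Function.onFun, id_eq, id_eq] at this
    intro a hax hay
    exact Finset.disjoint_left.1 this (Finset.mem_eraseNone.1 hax) (Finset.mem_eraseNone.1 hay)
  sup_parts := by
    apply Finset.eq_univ_of_forall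
    intro a
    rw [Finset.mem_sup]
    obtain ⟨t, ht, hat⟩ := Q.exists_mem (mem_univ (some a))
    refine ⟨Finset.eraseNone t, Finset.mem_erase.2 ⟨?_, Finset.mem_image_of_mem _ ht⟩,
      Finset.mem_eraseNone.2 hat⟩
    intro h
    have : a ∈ Finset.eraseNone t := Finset.mem_eraseNone.2 hat
    rw [h] at this
    exact absurd this (Finset.notMem_empty a)
  bot_notMem := by simp

private lemma restrict_addNone (P : Finpartition (univ : Finset α)) :
    restrictPart (addNonePart P) = P := by
  ext1
  show ((insert {none} (P.parts.map (M α))).image Finset.eraseNone).erase ∅ = P.parts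
  rw [Finset.image_insert, Finset.map_eq_image, Finset.image_image]
  have h1 : Finset.eraseNone ({none} : Finset (Option α)) = ∅ := Finset.eraseNone_none
  have h2 : (Finset.eraseNone ∘ (M α)) = id := by
    funext u
    show Finset.eraseNone ((Finset.mapEmbedding Function.Embedding.some) u) = u
    rw [show ((Finset.mapEmbedding Function.Embedding.some) u : Finset (Option α))
        = u.map Function.Embedding.some from Finset.mapEmbedding_apply,
      Finset.eraseNone_map_some]
  rw [h1, h2, Finset.image_id,
    Finset.erase_insert (by simpa using P.not_bot_mem)]

private lemma restrict_addTo (P : Finpartition (univ : Finset α)) (t : Finset α)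
    (ht : t ∈ P.parts) : restrictPart (addToPart P t ht) = P := by
  ext1
  show ((insert (Finset.insertNone t) ((P.parts.erase t).map (M α))).image
      Finset.eraseNone).erase ∅ = P.parts
  rw [Finset.image_insert, Finset.map_eq_image, Finset.image_image]
  have h2 : (Finset.eraseNone ∘ (M α)) = id := by
    funext u
    show Finset.eraseNone ((Finset.mapEmbedding Function.Embedding.some) u) = u
    rw [show ((Finset.mapEmbedding Function.Embedding.some) u : Finset (Option α))
        = u.map Function.Embedding.some from Finset.mapEmbedding_apply,
      Finset.eraseNone_map_some]
  rw [Finset.eraseNone_insertNone, h2, Finset.image_id, Finset.insert_erase ht]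
  apply Finset.erase_eq_of_notMem
  rw [← bot_eq_empty]
  exact P.bot_notMem

private lemma part_none_addNone (P : Finpartition (univ : Finset α)) :
    (addNonePart P).part none = {none} :=
  Finpartition.part_eq_of_mem _ (by rw [addNonePart_parts]; exact Finset.mem_insert_self _ _)
    (Finset.mem_singleton_self none)

private lemma part_none_addTo (P : Finpartition (univ : Finset α)) (t : Finset α)
    (ht : t ∈ P.parts) : (addToPart P t ht).part none = Finset.insertNone t :=
  Finpartition.part_eq_of_mem _ (by rw [addToPart_parts]; exact Finset.mem_insert_self _ _)
    Finset.none_mem_insertNone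

private lemma card_addNone (P : Finpartition (univ : Finset α)) :
    (addNonePart P).parts.card = P.parts.card + 1 := by
  rw [addNonePart_parts, Finset.card_insert_of_notMem, Finset.card_map]
  rw [Finset.mem_map]
  rintro ⟨u, hu, h⟩
  rw [show (M α) u = u.map Function.Embedding.some from Finset.mapEmbedding_apply] at h
  have : none ∈ ({none} : Finset (Option α)) := Finset.mem_singleton_self none
  rw [← h, Finset.mem_map] at this
  obtain ⟨a, -, ha⟩ := this
  exact Option.some_ne_none a ha

private lemma card_addTo (P : Finpartition (univ : Finset α)) (t : Finset α)
    (ht : t ∈ P.parts) : (addToPart P t ht).parts.card = P.parts.card := by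
  rw [addToPart_parts, Finset.card_insert_of_notMem, Finset.card_map,
    Finset.card_erase_of_mem ht, Nat.sub_add_cancel (Finset.card_pos.2 ⟨t, ht⟩)]
  rw [Finset.mem_map]
  rintro ⟨u, hu, h⟩
  rw [show (M α) u = u.map Function.Embedding.some from Finset.mapEmbedding_apply] at h
  have : none ∈ Finset.insertNone t := Finset.none_mem_insertNone
  rw [← h, Finset.mem_map] at this
  obtain ⟨a, -, ha⟩ := this
  exact Option.some_ne_none a ha

end

section
variable {α : Type*} [Fintype α] [DecidableEq α]

private lemma restrictPart_parts (Q : Finpartition (univ : Finset (Option α))) :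
    (restrictPart Q).parts = (Q.parts.image Finset.eraseNone).erase ∅ := rfl

private def FF (x : Σ P : Finpartition (univ : Finset α), Option {t // t ∈ P.parts}) :
    Finpartition (univ : Finset (Option α)) :=
  Option.elim x.2 (addNonePart x.1) (fun t => addToPart x.1 t.1 t.2)

private lemma FF_restrict (x : Σ P : Finpartition (univ : Finset α),
    Option {t // t ∈ P.parts}) : restrictPart (FF x) = x.1 := by
  obtain ⟨P, (_ | t)⟩ := x
  · exact restrict_addNone P
  · exact restrict_addTo P t.1 t.2

private lemma map_eraseNone_eq {v : Finset (Option α)} (hnv : none ∉ v) :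
    (M α) (Finset.eraseNone v) = v := by
  rw [show ((M α) (Finset.eraseNone v) : Finset (Option α))
      = (Finset.eraseNone v).map Function.Embedding.some from Finset.mapEmbedding_apply,
    Finset.map_some_eraseNone, Finset.erase_eq_of_notMem hnv]

private lemma FF_inj : Function.Injective (FF (α := α)) := by
  rintro ⟨P, o⟩ ⟨P', o'⟩ h
  have hP : P = P' := by
    have h1 := FF_restrict ⟨P, o⟩
    have h2 := FF_restrict ⟨P', o'⟩
    rw [h] at h1
    exact h1.symm.trans h2
  subst hP
  suffices h' : o = o' by rw [h']
  have hpn := congrArg (fun Q => Finpartition.part Q none) h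
  match o, o' with
  | none, none => rfl
  | none, some t =>
    exfalso
    have hpn' : (addNonePart P).part none = (addToPart P t.1 t.2).part none := hpn
    rw [part_none_addNone, part_none_addTo] at hpn'
    obtain ⟨a, ha⟩ := P.nonempty_of_mem_parts t.2
    have h2 : some a ∈ Finset.insertNone t.1 := Finset.some_mem_insertNone.2 ha
    rw [← hpn'] at h2
    exact Option.some_ne_none a (Finset.mem_singleton.1 h2)
  | some t, none =>
    exfalso
    have hpn' : (addToPart P t.1 t.2).part none = (addNonePart P).part none := hpn
    rw [part_none_addNone, part_none_addTo] at hpn'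
    obtain ⟨a, ha⟩ := P.nonempty_of_mem_parts t.2
    have h2 : some a ∈ Finset.insertNone t.1 := Finset.some_mem_insertNone.2 ha
    rw [hpn'] at h2
    exact Option.some_ne_none a (Finset.mem_singleton.1 h2)
  | some t, some t' =>
    have hpn' : (addToPart P t.1 t.2).part none = (addToPart P t'.1 t'.2).part none := hpn
    rw [part_none_addTo, part_none_addTo] at hpn'
    have : t.1 = t'.1 := by
      rw [← Finset.eraseNone_insertNone t.1, hpn', Finset.eraseNone_insertNone]
    rw [Subtype.ext this]

private lemma FF_surj : Function.Surjective (FF (α := α)) := by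
  intro Q
  have hu : Q.part none ∈ Q.parts := Q.part_mem.2 (mem_univ none)
  have hnu : none ∈ Q.part none := Q.mem_part (mem_univ none)
  by_cases h : Q.part none = {none}
  · refine ⟨⟨restrictPart Q, none⟩, ?_⟩
    show addNonePart (restrictPart Q) = Q
    ext1
    rw [addNonePart_parts]
    ext v
    constructor
    · intro hv
      rcases Finset.mem_insert.1 hv with rfl | hv
      · rw [← h]; exact hu
      · rw [Finset.mem_map] at hv
        obtain ⟨w, hw, rfl⟩ := hv
        rw [restrictPart_parts, Finset.mem_erase, Finset.mem_image] at hw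
        obtain ⟨hwne, w', hw'Q, rfl⟩ := hw
        have hnw' : none ∉ w' := by
          intro hn
          apply hwne
          rw [Q.part_eq_of_mem hw'Q hn] at h
          rw [h]
          exact Finset.eraseNone_none
        rw [map_eraseNone_eq hnw']
        exact hw'Q
    · intro hv
      by_cases hveq : v = Q.part none
      · rw [hveq, h]; exact Finset.mem_insert_self _ _
      · have hnv : none ∉ v := fun hn => hveq (Q.part_eq_of_mem hv hn).symm
        apply Finset.mem_insert_of_mem
        rw [Finset.mem_map]
        refine ⟨Finset.eraseNone v, ?_, map_eraseNone_eq hnv⟩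
        rw [restrictPart_parts, Finset.mem_erase, Finset.mem_image]
        refine ⟨?_, v, hv, rfl⟩
        obtain ⟨x, hx⟩ := Q.nonempty_of_mem_parts hv
        match x with
        | none => exact absurd hx hnv
        | some a =>
          intro h0
          have : a ∈ Finset.eraseNone v := Finset.mem_eraseNone.2 hx
          rw [h0] at this
          exact absurd this (Finset.notMem_empty a)
  · have hmem : Finset.eraseNone (Q.part none) ∈ (restrictPart Q).parts := by
      rw [restrictPart_parts, Finset.mem_erase, Finset.mem_image]
      refine ⟨?_, _, hu, rfl⟩
      intro h0
      apply h
      ext (_ | a)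
      · simp [hnu]
      · simp only [Finset.mem_singleton]
        constructor
        · intro ha
          exfalso
          have : a ∈ Finset.eraseNone (Q.part none) := Finset.mem_eraseNone.2 ha
          rw [h0] at this
          exact absurd this (Finset.notMem_empty a)
        · intro hc
          exact absurd hc (Option.some_ne_none a)
    refine ⟨⟨restrictPart Q, some ⟨_, hmem⟩⟩, ?_⟩
    show addToPart (restrictPart Q) _ hmem = Q
    ext1
    rw [addToPart_parts]
    have hins : Finset.insertNone (Finset.eraseNone (Q.part none)) = Q.part none := by
      rw [Finset.insertNone_eraseNone, Finset.insert_eq_self.2 hnu]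
    rw [hins]
    ext v
    constructor
    · intro hv
      rcases Finset.mem_insert.1 hv with rfl | hv
      · exact hu
      · rw [Finset.mem_map] at hv
        obtain ⟨w, hw, rfl⟩ := hv
        rw [Finset.mem_erase] at hw
        obtain ⟨hwne, hw⟩ := hw
        rw [restrictPart_parts, Finset.mem_erase, Finset.mem_image] at hw
        obtain ⟨hne, w', hw'Q, rfl⟩ := hw
        have hnw' : none ∉ w' := by
          intro hn
          exact hwne (by rw [Q.part_eq_of_mem hw'Q hn])
        rw [map_eraseNone_eq hnw']
        exact hw'Q
    · intro hv
      by_cases hveq : v = Q.part none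
      · rw [hveq]; exact Finset.mem_insert_self _ _
      · have hnv : none ∉ v := fun hn => hveq (Q.part_eq_of_mem hv hn).symm
        apply Finset.mem_insert_of_mem
        rw [Finset.mem_map]
        refine ⟨Finset.eraseNone v, ?_, map_eraseNone_eq hnv⟩
        rw [Finset.mem_erase]
        obtain ⟨a, ha⟩ : ∃ a : α, some a ∈ v := by
          obtain ⟨x, hx⟩ := Q.nonempty_of_mem_parts hv
          match x with
          | none => exact absurd hx hnv
          | some a => exact ⟨a, hx⟩
        constructor
        · intro h0
          have h1 : a ∈ Finset.eraseNone (Q.part none) := by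
            rw [← h0]; exact Finset.mem_eraseNone.2 ha
          have h2 : some a ∈ Q.part none := Finset.mem_eraseNone.1 h1
          exact Finset.disjoint_left.1 (Q.disjoint hv hu hveq) ha h2
        · rw [restrictPart_parts, Finset.mem_erase, Finset.mem_image]
          refine ⟨?_, v, hv, rfl⟩
          intro h0
          have : a ∈ Finset.eraseNone v := Finset.mem_eraseNone.2 ha
          rw [h0] at this
          exact absurd this (Finset.notMem_empty a)

end

section
variable {α : Type*} [Fintype α] [DecidableEq α]

private lemma sum_part_option (f : ℕ → ℕ) :
    ∑ Q : Finpartition (univ : Finset (Option α)), f Q.parts.card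
      = ∑ P : Finpartition (univ : Finset α),
          (f (P.parts.card + 1) + P.parts.card * f P.parts.card) := by
  rw [← Fintype.sum_bijective FF ⟨FF_inj, FF_surj⟩
      (fun x => f (FF x).parts.card) (fun Q => f Q.parts.card) (fun x => rfl)]
  rw [← Finset.univ_sigma_univ, Finset.sum_sigma]
  apply Finset.sum_congr rfl
  intro P _
  rw [Fintype.sum_option (fun o => f (FF ⟨P, o⟩).parts.card)]
  have h1 : (FF ⟨P, none⟩).parts.card = P.parts.card + 1 := card_addNone P
  rw [h1]
  congr 1
  have h2 : ∀ t : {t // t ∈ P.parts}, f (FF ⟨P, some t⟩).parts.card = f P.parts.card :=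
    fun t => by rw [show (FF ⟨P, some t⟩).parts.card = P.parts.card from card_addTo P t.1 t.2]
  rw [Finset.sum_congr rfl (fun t _ => h2 t), Finset.sum_const, smul_eq_mul,
    Finset.card_univ, Fintype.card_coe]

private def congrPart {β : Type*} [Fintype β] [DecidableEq β] (e : α ≃ β)
    (P : Finpartition (univ : Finset α)) : Finpartition (univ : Finset β) :=
  (mapPart e.toEmbedding P).copy (Finset.map_univ_equiv e)

private lemma congrPart_parts {β : Type*} [Fintype β] [DecidableEq β] (e : α ≃ β)
    (P : Finpartition (univ : Finset α)) :
    (congrPart e P).parts = P.parts.map (Finset.mapEmbedding e.toEmbedding).toEmbedding := rfl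

private lemma congrPart_inv {β : Type*} [Fintype β] [DecidableEq β] (e : α ≃ β)
    (P : Finpartition (univ : Finset α)) : congrPart e.symm (congrPart e P) = P := by
  ext1
  rw [congrPart_parts, congrPart_parts, Finset.map_map]
  ext v
  simp only [Finset.mem_map, Function.Embedding.trans_apply, RelEmbedding.coe_toEmbedding,
    Finset.mapEmbedding_apply]
  constructor
  · rintro ⟨u, hu, rfl⟩
    have : (u.map e.toEmbedding).map e.symm.toEmbedding = u := by
      rw [Finset.map_map]; ext a; simp
    rw [this]; exact hu
  · intro hv
    refine ⟨v, hv, ?_⟩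
    rw [Finset.map_map]; ext a; simp

private lemma sum_congr_card {β : Type*} [Fintype β] [DecidableEq β] (e : α ≃ β) (f : ℕ → ℕ) :
    ∑ P : Finpartition (univ : Finset α), f P.parts.card
      = ∑ Q : Finpartition (univ : Finset β), f Q.parts.card := by
  apply Fintype.sum_bijective (congrPart e) ?_ _ _ (fun P => ?_)
  · constructor
    · intro P P' h
      have := congrArg (congrPart e.symm) h
      rwa [congrPart_inv, congrPart_inv] at this
    · intro Q
      refine ⟨congrPart e.symm Q, ?_⟩
      have := congrPart_inv e.symm Q
      rwa [Equiv.symm_symm] at this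
  · rw [congrPart_parts, Finset.card_map]

end

private noncomputable def TTaux (n : ℕ) : ℕ :=
  ∑ P : Finpartition (univ : Finset (Fin n)), P.parts.card

private noncomputable def SSaux (n : ℕ) : ℕ :=
  ∑ P : Finpartition (univ : Finset (Fin n)), P.parts.card ^ 2

private lemma sum_level (n : ℕ) (f : ℕ → ℕ) :
    ∑ Q : Finpartition (univ : Finset (Fin (n+1))), f Q.parts.card
      = ∑ P : Finpartition (univ : Finset (Fin n)),
          (f (P.parts.card + 1) + P.parts.card * f P.parts.card) := by
  rw [sum_congr_card (finSuccEquiv n) f, sum_part_option f]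

private lemma bell_succ_aux (n : ℕ) : bell (n+1) = bell n + TTaux n := by
  rw [bell, Fintype.card_eq_sum_ones, show (1 : ℕ) = (fun _ : ℕ => 1) 1 from rfl,
    sum_level n (fun _ => 1)]
  simp only [mul_one]
  rw [Finset.sum_add_distrib, bell, Fintype.card_eq_sum_ones, TTaux]

private lemma TT_succ_aux (n : ℕ) : TTaux (n+1) = TTaux n + bell n + SSaux n := by
  have h := sum_level n id
  simp only [id_eq] at h
  rw [TTaux, h, Finset.sum_add_distrib, Finset.sum_add_distrib]
  rw [TTaux, SSaux, bell, Fintype.card_eq_sum_ones]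
  have : ∀ P : Finpartition (univ : Finset (Fin n)),
      P.parts.card * P.parts.card = P.parts.card ^ 2 := fun P => (sq _).symm
  rw [Finset.sum_congr rfl (fun P _ => this P)]

private lemma cauchy_aux (n : ℕ) : TTaux n ^ 2 ≤ bell n * SSaux n := by
  have h := sq_sum_le_card_mul_sum_sq (s := (univ : Finset (Finpartition (univ : Finset (Fin n)))))
    (f := fun P => (P.parts.card : ℤ))
  have hz : ((TTaux n : ℤ))^2 ≤ (bell n : ℤ) * (SSaux n : ℤ) := by
    have h1 : ((TTaux n : ℤ)) = ∑ P : Finpartition (univ : Finset (Fin n)), (P.parts.card : ℤ) := by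
      rw [TTaux]; push_cast; rfl
    have h2 : ((SSaux n : ℤ)) = ∑ P : Finpartition (univ : Finset (Fin n)), (P.parts.card : ℤ)^2 := by
      rw [SSaux]; push_cast; rfl
    have h3 : ((bell n : ℤ)) = (#(univ : Finset (Finpartition (univ : Finset (Fin n)))) : ℤ) := by
      rw [bell, Finset.card_univ]
    rw [h1, h2, h3]
    exact_mod_cast h
  exact_mod_cast hz


end BellLogConvexAux

/-- The Bell numbers are strictly log-convex: for all `n ≥ 1`, `Bₙ² < B_{n-1} B_{n+1}`. -/
theorem stmt_9 (n : ℕ) (hn : 1 ≤ n) :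
    bell n ^ 2 < bell (n - 1) * bell (n + 1) := by
  obtain ⟨m, rfl⟩ : ∃ m, n = m + 1 := ⟨n - 1, (Nat.succ_pred_eq_of_pos hn).symm⟩
  simp only [Nat.add_sub_cancel]
  have h1 := bell_succ_aux m
  have h2 := bell_succ_aux (m+1)
  have h3 := TT_succ_aux m
  have hC := cauchy_aux m
  have hN : Nonempty (Finpartition (univ : Finset (Fin m))) := ⟨⊥⟩
  have hB : 1 ≤ bell m := Fintype.card_pos
  nlinarith [h1, h2, h3, hC, hB]
end

section
/- For all integers n ≥ 4, B_{n+1} · (B_{n−1} − B_{n−2}) > B_n · (B_n − B_{n−1}), where B_k is the k-th Bell number. -/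
open Finset SimpleGraph

namespace BellStmt12

variable {α : Type*} [DecidableEq α]

/-- weighted count of finpartitions of a finset -/
def psum (g : ℕ → ℤ) (s : Finset α) : ℤ :=
  ∑ P : Finpartition s, g P.parts.card

section InsertLemma

variable {s : Finset α} {a : α}

lemma not_mem_of_mem_parts (ha : a ∉ s) {σ : Finpartition s} {t : Finset α}
    (ht : t ∈ σ.parts) : a ∉ t := fun h => ha (σ.le ht h)

/-- add `a` as a singleton block -/
def addSingleton (ha : a ∉ s) (σ : Finpartition s) : Finpartition (insert a s) where
  parts := insert {a} σ.parts
  supIndep := by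
    rw [Finset.supIndep_iff_pairwiseDisjoint]
    intro u hu v hv huv
    simp only [coe_insert, Set.mem_insert_iff, mem_coe] at hu hv
    simp only [Function.onFun, id_eq]
    rcases hu with rfl | hu <;> rcases hv with rfl | hv
    · exact absurd rfl huv
    · simpa [Finset.disjoint_singleton_left] using not_mem_of_mem_parts ha hv
    · simpa [Finset.disjoint_singleton_right] using not_mem_of_mem_parts ha hu
    · exact σ.disjoint hu hv huv
  sup_parts := by
    rw [Finset.sup_insert, σ.sup_parts]
    simp only [id_eq, Finset.sup_eq_union, Finset.insert_eq]
  bot_notMem := by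
    simp only [Finset.bot_eq_empty, mem_insert]
    push_neg
    exact ⟨fun h => (singleton_ne_empty a) h.symm, σ.bot_notMem⟩

@[simp] lemma addSingleton_parts (ha : a ∉ s) (σ : Finpartition s) :
    (addSingleton ha σ).parts = insert {a} σ.parts := rfl

lemma singleton_not_mem_parts (ha : a ∉ s) (σ : Finpartition s) : ({a} : Finset α) ∉ σ.parts :=
  fun h => not_mem_of_mem_parts ha h (mem_singleton_self a)

lemma addSingleton_card (ha : a ∉ s) (σ : Finpartition s) :
    (addSingleton ha σ).parts.card = σ.parts.card + 1 := by
  rw [addSingleton_parts, card_insert_of_notMem (singleton_not_mem_parts ha σ)]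

lemma addSingleton_part (ha : a ∉ s) (σ : Finpartition s) :
    (addSingleton ha σ).part a = {a} :=
  Finpartition.part_eq_of_mem _ (by simp) (mem_singleton_self a)

/-- add `a` to the block `t` -/
def addToPart (ha : a ∉ s) (σ : Finpartition s) {t : Finset α} (ht : t ∈ σ.parts) :
    Finpartition (insert a s) where
  parts := insert (insert a t) (σ.parts.erase t)
  supIndep := by
    rw [Finset.supIndep_iff_pairwiseDisjoint]
    intro u hu v hv huv
    simp only [coe_insert, Set.mem_insert_iff, mem_coe, mem_erase] at hu hv
    simp only [Function.onFun, id_eq]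
    rcases hu with rfl | ⟨hu1, hu2⟩ <;> rcases hv with rfl | ⟨hv1, hv2⟩
    · exact absurd rfl huv
    · have h1 : Disjoint t v := σ.disjoint ht hv2 (Ne.symm hv1)
      have h2 : a ∉ v := not_mem_of_mem_parts ha hv2
      rw [Finset.disjoint_insert_left]
      exact ⟨h2, h1⟩
    · have h1 : Disjoint u t := σ.disjoint hu2 ht hu1
      have h2 : a ∉ u := not_mem_of_mem_parts ha hu2
      rw [Finset.disjoint_insert_right]
      exact ⟨h2, h1⟩
    · exact σ.disjoint hu2 hv2 huv
  sup_parts := by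
    rw [Finset.sup_insert]
    have h1 : t ⊔ (σ.parts.erase t).sup id = s := by
      have h0 := σ.sup_parts
      rw [← insert_erase ht, Finset.sup_insert] at h0
      simpa using h0
    have h2 : (insert a t : Finset α) ⊔ (σ.parts.erase t).sup id
        = insert a (t ⊔ (σ.parts.erase t).sup id) := by
      simp only [Finset.sup_eq_union, Finset.insert_union]
    simp only [id_eq]
    rw [h2, h1]
  bot_notMem := by
    simp only [Finset.bot_eq_empty, mem_insert, mem_erase]
    push_neg
    exact ⟨fun h => (insert_ne_empty a t) h.symm, fun _ => σ.bot_notMem⟩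

@[simp] lemma addToPart_parts (ha : a ∉ s) (σ : Finpartition s) {t : Finset α}
    (ht : t ∈ σ.parts) : (addToPart ha σ ht).parts = insert (insert a t) (σ.parts.erase t) := rfl

lemma insert_not_mem_erase (ha : a ∉ s) (σ : Finpartition s) {t u : Finset α} :
    insert a t ∉ σ.parts.erase u := by
  intro h
  exact not_mem_of_mem_parts ha (mem_of_mem_erase h) (mem_insert_self a t)

lemma addToPart_card (ha : a ∉ s) (σ : Finpartition s) {t : Finset α} (ht : t ∈ σ.parts) :
    (addToPart ha σ ht).parts.card = σ.parts.card := by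
  rw [addToPart_parts, card_insert_of_notMem (insert_not_mem_erase ha σ),
    card_erase_of_mem ht]
  have := card_pos.2 ⟨t, ht⟩
  omega

lemma addToPart_part (ha : a ∉ s) (σ : Finpartition s) {t : Finset α} (ht : t ∈ σ.parts) :
    (addToPart ha σ ht).part a = insert a t :=
  Finpartition.part_eq_of_mem _ (by simp) (mem_insert_self a t)


lemma del_sup (ha : a ∉ s) (P : Finpartition (insert a s)) :
    (P.parts.image (·.erase a)).sup id = s := by
  ext x
  simp only [Finset.mem_sup, mem_image, id_eq]
  constructor
  · rintro ⟨u, ⟨t, ht, rfl⟩, hx⟩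
    have hx' : x ∈ t := mem_of_mem_erase hx
    have hxa : x ≠ a := ne_of_mem_erase hx
    rcases mem_insert.1 (P.le ht hx') with rfl | h
    · exact absurd rfl hxa
    · exact h
  · intro hx
    obtain ⟨t, ht, hxt⟩ := P.exists_mem (mem_insert_of_mem hx)
    exact ⟨t.erase a, ⟨t, ht, rfl⟩, mem_erase.2 ⟨fun h => ha (h ▸ hx), hxt⟩⟩

/-- remove `a` from a finpartition of `insert a s` -/
def del (ha : a ∉ s) (P : Finpartition (insert a s)) : Finpartition s :=
  Finpartition.ofErase (P.parts.image (·.erase a))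
    (by
      rw [Finset.supIndep_iff_pairwiseDisjoint]
      rintro u hu v hv huv
      simp only [Function.onFun, id_eq]
      simp only [coe_image, Set.mem_image, mem_coe] at hu hv
      obtain ⟨t1, ht1, rfl⟩ := hu
      obtain ⟨t2, ht2, rfl⟩ := hv
      have ht12 : t1 ≠ t2 := by rintro rfl; exact huv rfl
      exact (P.disjoint ht1 ht2 ht12).mono (erase_subset _ _) (erase_subset _ _))
    (del_sup ha P)

lemma del_parts (ha : a ∉ s) (P : Finpartition (insert a s)) :
    (del ha P).parts = (P.parts.image (·.erase a)).erase ∅ := rfl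

lemma del_addSingleton (ha : a ∉ s) (σ : Finpartition s) :
    del ha (addSingleton ha σ) = σ := by
  have himg : σ.parts.image (·.erase a) = σ.parts := by
    rw [Finset.image_congr (g := id), Finset.image_id]
    intro t ht
    exact erase_eq_of_notMem (not_mem_of_mem_parts ha ht)
  apply Finpartition.ext
  rw [del_parts, addSingleton_parts, Finset.image_insert, himg]
  rw [show ({a} : Finset α).erase a = ∅ from by simp]
  have hbot : (∅ : Finset α) ∉ σ.parts := by
    have := σ.bot_notMem
    rwa [Finset.bot_eq_empty] at this
  rw [Finset.erase_insert hbot]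

lemma del_addToPart (ha : a ∉ s) (σ : Finpartition s) {t : Finset α} (ht : t ∈ σ.parts) :
    del ha (addToPart ha σ ht) = σ := by
  have hat : a ∉ t := not_mem_of_mem_parts ha ht
  have himg : (σ.parts.erase t).image (·.erase a) = σ.parts.erase t := by
    rw [Finset.image_congr (g := id), Finset.image_id]
    intro u hu
    exact erase_eq_of_notMem (not_mem_of_mem_parts ha (mem_of_mem_erase hu))
  apply Finpartition.ext
  rw [del_parts, addToPart_parts, Finset.image_insert, himg,
    Finset.erase_insert hat, insert_erase ht]
  apply erase_eq_of_notMem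
  have := σ.bot_notMem
  rwa [Finset.bot_eq_empty] at this

section Reconstruct

variable (ha : a ∉ s) (P : Finpartition (insert a s))

lemma part_a_mem : P.part a ∈ P.parts := P.part_mem.2 (mem_insert_self a s)

lemma a_mem_part : a ∈ P.part a := P.mem_part (mem_insert_self a s)

lemma not_mem_of_ne_part {t : Finset α} (ht : t ∈ P.parts) (htu : t ≠ P.part a) : a ∉ t :=
  fun h => htu (P.part_eq_of_mem ht h).symm

lemma del_parts_eq :
    (del ha P).parts = insert ((P.part a).erase a) (P.parts.erase (P.part a)) \ {∅} := by
  have himg : (P.parts.erase (P.part a)).image (·.erase a) = P.parts.erase (P.part a) := by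
    rw [Finset.image_congr (g := id), Finset.image_id]
    intro u hu
    exact erase_eq_of_notMem (not_mem_of_ne_part P (mem_of_mem_erase hu) (ne_of_mem_erase hu))
  have h2 : P.parts.image (·.erase a) = insert ((P.part a).erase a) (P.parts.erase (P.part a)) := by
    conv_lhs => rw [← insert_erase (part_a_mem P)]
    rw [Finset.image_insert, himg]
  rw [del_parts, h2, sdiff_singleton_eq_erase]

lemma empty_not_mem_erase_parts : ∅ ∉ P.parts.erase (P.part a) := by
  intro h
  have := P.bot_notMem
  rw [Finset.bot_eq_empty] at this
  exact this (mem_of_mem_erase h)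

lemma reconstruct_singleton (hP : P.part a = {a}) : addSingleton ha (del ha P) = P := by
  apply Finpartition.ext
  rw [addSingleton_parts, del_parts_eq, hP]
  rw [show ({a} : Finset α).erase a = ∅ from by simp, sdiff_singleton_eq_erase,
    Finset.erase_insert (show (∅ : Finset α) ∉ P.parts.erase {a} from by
      rw [← hP]; exact empty_not_mem_erase_parts P)]
  rw [← hP, insert_erase (part_a_mem P)]

lemma erase_part_nonempty (hP : P.part a ≠ {a}) : (P.part a).erase a ≠ ∅ := by
  intro h
  rcases (Finset.erase_eq_empty_iff _ _).1 h with h1 | h1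
  · exact P.ne_bot (part_a_mem P) (by rw [h1, Finset.bot_eq_empty])
  · exact hP h1

lemma erase_part_mem_del (hP : P.part a ≠ {a}) : (P.part a).erase a ∈ (del ha P).parts := by
  rw [del_parts_eq, sdiff_singleton_eq_erase, mem_erase]
  exact ⟨erase_part_nonempty P hP, mem_insert_self _ _⟩

lemma reconstruct_part (hP : P.part a ≠ {a}) :
    addToPart ha (del ha P) (erase_part_mem_del ha P hP) = P := by
  have hne : (P.part a).erase a ∉ P.parts.erase (P.part a) := by
    intro h
    have hdisj := P.disjoint (mem_of_mem_erase h) (part_a_mem P) (ne_of_mem_erase h)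
    obtain ⟨x, hx⟩ := nonempty_iff_ne_empty.2 (erase_part_nonempty P hP)
    exact (Finset.disjoint_left.1 hdisj) hx (mem_of_mem_erase hx)
  apply Finpartition.ext
  have h0 : (∅ : Finset α) ∉ insert ((P.part a).erase a) (P.parts.erase (P.part a)) := by
    simp only [mem_insert]
    push_neg
    exact ⟨fun h => erase_part_nonempty P hP h.symm, empty_not_mem_erase_parts P⟩
  rw [addToPart_parts, del_parts_eq, sdiff_singleton_eq_erase,
    Finset.erase_eq_of_notMem h0]
  rw [Finset.erase_insert hne, insert_erase (a_mem_part P), insert_erase (part_a_mem P)]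

lemma card_del_of_singleton (hP : P.part a = {a}) :
    P.parts.card = (del ha P).parts.card + 1 := by
  conv_lhs => rw [← reconstruct_singleton ha P hP]
  rw [addSingleton_card]

lemma card_del_of_part (hP : P.part a ≠ {a}) :
    P.parts.card = (del ha P).parts.card := by
  conv_lhs => rw [← reconstruct_part ha P hP]
  rw [addToPart_card]

end Reconstruct


lemma psum_insert (g : ℕ → ℤ) {s : Finset α} {a : α} (ha : a ∉ s) :
    psum g (insert a s) = psum (fun k => g (k + 1) + (k : ℤ) * g k) s := by
  classical
  rw [psum]
  rw [← Finset.sum_filter_add_sum_filter_not Finset.univ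
    (fun P : Finpartition (insert a s) => P.part a = {a})]
  have h1 : ∑ P ∈ Finset.univ.filter (fun P : Finpartition (insert a s) => P.part a = {a}),
      g P.parts.card = ∑ σ : Finpartition s, g (σ.parts.card + 1) := by
    refine Finset.sum_bij' (fun P _ => del ha P) (fun σ _ => addSingleton ha σ)
      (fun P hP => mem_univ _) (fun σ _ => ?_) (fun P hP => ?_) (fun σ _ => ?_) (fun P hP => ?_)
    · exact mem_filter.2 ⟨mem_univ _, addSingleton_part ha σ⟩
    · exact reconstruct_singleton ha P (mem_filter.1 hP).2
    · exact del_addSingleton ha σ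
    · rw [card_del_of_singleton ha P (mem_filter.1 hP).2]
  have h2 : ∑ P ∈ Finset.univ.filter (fun P : Finpartition (insert a s) => ¬ P.part a = {a}),
      g P.parts.card
      = ∑ p ∈ Finset.univ.sigma (fun σ : Finpartition s => σ.parts), g p.1.parts.card := by
    refine Finset.sum_bij'
      (fun P hP => (⟨del ha P, (P.part a).erase a⟩ : (σ : Finpartition s) × Finset α))
      (fun p hp => addToPart ha p.1 (mem_sigma.1 hp).2) (fun P hP => ?_) (fun p hp => ?_)
      (fun P hP => ?_) (fun p hp => ?_) (fun P hP => ?_)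
    · exact mem_sigma.2 ⟨mem_univ _, erase_part_mem_del ha P (mem_filter.1 hP).2⟩
    · refine mem_filter.2 ⟨mem_univ _, ?_⟩
      rw [addToPart_part]
      intro h
      obtain ⟨σ, t⟩ := p
      have ht : t ∈ σ.parts := (mem_sigma.1 hp).2
      obtain ⟨x, hx⟩ := σ.nonempty_of_mem_parts ht
      have hxa : x = a := by
        have : x ∈ ({a} : Finset α) := h ▸ mem_insert_of_mem hx
        simpa using this
      exact not_mem_of_mem_parts ha ht (hxa ▸ hx)
    · exact reconstruct_part ha P (mem_filter.1 hP).2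
    · obtain ⟨σ, t⟩ := p
      have ht : t ∈ σ.parts := (mem_sigma.1 hp).2
      have hat : a ∉ t := not_mem_of_mem_parts ha ht
      refine Sigma.ext (del_addToPart ha σ ht) (heq_of_eq ?_)
      dsimp only
      rw [addToPart_part, Finset.erase_insert hat]
    · rw [card_del_of_part ha P (mem_filter.1 hP).2]
  rw [h1, h2, Finset.sum_sigma]
  rw [psum, ← Finset.sum_add_distrib]
  congr 1
  funext σ
  simp only [Finset.sum_const, nsmul_eq_mul]

end InsertLemma


lemma psum_empty {α : Type*} [DecidableEq α] (g : ℕ → ℤ) : psum g (∅ : Finset α) = g 0 := by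
  haveI : Unique (Finpartition (∅ : Finset α)) :=
    Finset.bot_eq_empty (α := α) ▸ (inferInstance : Unique (Finpartition (⊥ : Finset α)))
  rw [psum, Fintype.sum_unique]
  congr 1
  rw [Finset.card_eq_zero, Finpartition.parts_eq_empty_iff, Finset.bot_eq_empty]

lemma psum_card_eq : ∀ (n : ℕ) (g : ℕ → ℤ) {α β : Type*} [DecidableEq α] [DecidableEq β]
    (s : Finset α) (t : Finset β), s.card = n → t.card = n → psum g s = psum g t := by
  intro n
  induction n with
  | zero =>
    intro g α β _ _ s t hs ht
    rw [Finset.card_eq_zero] at hs ht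
    subst hs; subst ht
    rw [psum_empty, psum_empty]
  | succ n ih =>
    intro g α β _ _ s t hs ht
    obtain ⟨a, haa⟩ := Finset.card_pos.1 (by omega : 0 < s.card)
    obtain ⟨b, hbb⟩ := Finset.card_pos.1 (by omega : 0 < t.card)
    rw [← Finset.insert_erase haa, psum_insert _ (Finset.notMem_erase _ _),
      ← Finset.insert_erase hbb, psum_insert _ (Finset.notMem_erase _ _)]
    exact ih _ _ _ (by rw [Finset.card_erase_of_mem haa, hs]; omega)
      (by rw [Finset.card_erase_of_mem hbb, ht]; omega)

lemma psum_congr {α : Type*} [DecidableEq α] {g g' : ℕ → ℤ} (h : ∀ k, g k = g' k)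
    (s : Finset α) : psum g s = psum g' s := by
  rw [psum, psum]
  exact Finset.sum_congr rfl fun _ _ => h _

lemma psum_univ_succ (g : ℕ → ℤ) (m : ℕ) :
    psum g (univ : Finset (Fin (m + 1)))
      = psum (fun k => g (k + 1) + (k : ℤ) * g k) (univ : Finset (Fin m)) := by
  rw [show (univ : Finset (Fin (m+1))) = insert 0 ((univ : Finset (Fin (m+1))).erase 0)
    from (Finset.insert_erase (Finset.mem_univ 0)).symm]
  rw [psum_insert _ (Finset.notMem_erase _ _)]
  exact psum_card_eq m _ _ _
    (by rw [Finset.card_erase_of_mem (mem_univ _), Finset.card_univ, Fintype.card_fin]; omega)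
    (by rw [Finset.card_univ, Fintype.card_fin])

end BellStmt12

namespace BellStmt12

lemma bell0 (m : ℕ) : (bell m : ℤ) = psum (fun _ => (1 : ℤ)) (univ : Finset (Fin m)) := by
  rw [bell, psum, Finset.sum_const, Finset.card_univ, nsmul_eq_mul, mul_one]

lemma bell1 (m : ℕ) :
    (bell (m + 1) : ℤ) = psum (fun k => (k : ℤ) + 1) (univ : Finset (Fin m)) := by
  rw [bell0 (m + 1), psum_univ_succ]
  exact psum_congr (fun k => by ring) _

lemma bell2 (m : ℕ) :
    (bell (m + 2) : ℤ) = psum (fun k => (k : ℤ) ^ 2 + 2 * k + 2) (univ : Finset (Fin m)) := by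
  rw [show m + 2 = (m + 1) + 1 from rfl, bell1 (m + 1), psum_univ_succ]
  exact psum_congr (fun k => by push_cast; ring) _

lemma bell3 (m : ℕ) :
    (bell (m + 3) : ℤ)
      = psum (fun k => (k : ℤ) ^ 3 + 3 * k ^ 2 + 6 * k + 5) (univ : Finset (Fin m)) := by
  rw [show m + 3 = (m + 1) + 2 from rfl, bell2 (m + 1), psum_univ_succ]
  exact psum_congr (fun k => by push_cast; ring) _

lemma Wnonneg (x y : ℤ) (hx : 1 ≤ x) (hy : 1 ≤ y) :
    0 ≤ x^3*y + x*y^3 - 2*x^2*y^2 + 8*x*y - 3*x^2 - 3*y^2 + x + y - 4 := by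
  rcases eq_or_lt_of_le hx with h1 | h1
  · rw [← h1]
    nlinarith [sq_nonneg (y - 2), hy]
  rcases eq_or_lt_of_le hy with h2 | h2
  · rw [← h2]
    nlinarith [sq_nonneg (x - 2), hx]
  have hx2 : 2 ≤ x := h1
  have hy2 : 2 ≤ y := h2
  have h3 : (0:ℤ) ≤ x*y - 3 := by nlinarith
  nlinarith [mul_nonneg (sq_nonneg (x - y)) h3]

end BellStmt12


namespace BellStmt12

theorem final (n : ℕ) (hn : 4 ≤ n) :
    (bell (n + 1) : ℤ) * ((bell (n - 1) : ℤ) - bell (n - 2)) >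
      (bell n : ℤ) * ((bell n : ℤ) - bell (n - 1)) := by
  obtain ⟨m, rfl⟩ : ∃ m, n = m + 2 := ⟨n - 2, by omega⟩
  have hm : 2 ≤ m := by omega
  show (bell (m + 3) : ℤ) * ((bell (m + 1) : ℤ) - bell m) >
      (bell (m + 2) : ℤ) * ((bell (m + 2) : ℤ) - bell (m + 1))
  rw [gt_iff_lt, ← sub_pos]
  rw [bell3 m, bell2 m, bell1 m, bell0 m, psum, psum, psum, psum]
  set X := Finpartition (univ : Finset (Fin m)) with hX
  set k : X → ℤ := fun P => (P.parts.card : ℤ) with hk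
  have hk1 : ∀ P : X, 1 ≤ k P := by
    intro P
    have h1 : P.parts.Nonempty := by
      apply Finpartition.parts_nonempty
      have : (univ : Finset (Fin m)).Nonempty := by
        refine ⟨⟨0, by omega⟩, mem_univ _⟩
      rw [Finset.bot_eq_empty]
      exact Finset.nonempty_iff_ne_empty.1 this
    have := Finset.card_pos.2 h1
    show (1 : ℤ) ≤ (P.parts.card : ℤ)
    exact_mod_cast this
  have hs1 : (∑ P : X, ((k P) + 1)) - (∑ P : X, (1:ℤ)) = ∑ P : X, k P := by
    rw [← Finset.sum_sub_distrib]
    simp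
  have hs2 : (∑ P : X, ((k P)^2 + 2*(k P) + 2)) - (∑ P : X, ((k P) + 1))
      = ∑ P : X, ((k P)^2 + (k P) + 1) := by
    rw [← Finset.sum_sub_distrib]
    apply Finset.sum_congr rfl
    intros; ring
  have hprod : (∑ P : X, ((k P)^3 + 3*(k P)^2 + 6*(k P) + 5))
        * ((∑ P : X, ((k P) + 1)) - (∑ P : X, (1:ℤ)))
        - (∑ P : X, ((k P)^2 + 2*(k P) + 2))
        * ((∑ P : X, ((k P)^2 + 2*(k P) + 2)) - (∑ P : X, ((k P) + 1)))
      = ∑ P : X, ∑ Q : X,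
          (((k P)^3 + 3*(k P)^2 + 6*(k P) + 5) * (k Q)
            - ((k P)^2 + 2*(k P) + 2) * ((k Q)^2 + (k Q) + 1)) := by
    rw [hs1, hs2, Finset.sum_mul_sum, Finset.sum_mul_sum, ← Finset.sum_sub_distrib]
    apply Finset.sum_congr rfl
    intro P _
    rw [← Finset.sum_sub_distrib]
  have hconv : ∀ x y : ℤ,
      ((x^3 + 3*x^2 + 6*x + 5) * y - (x^2 + 2*x + 2) * (y^2 + y + 1))
        + ((y^3 + 3*y^2 + 6*y + 5) * x - (y^2 + 2*y + 2) * (x^2 + x + 1))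
      = x^3*y + x*y^3 - 2*x^2*y^2 + 8*x*y - 3*x^2 - 3*y^2 + x + y - 4 := by
    intro x y; ring
  set D := ∑ P : X, ∑ Q : X,
      (((k P)^3 + 3*(k P)^2 + 6*(k P) + 5) * (k Q)
        - ((k P)^2 + 2*(k P) + 2) * ((k Q)^2 + (k Q) + 1)) with hD
  have hdouble : 2 * D = ∑ P : X, ∑ Q : X,
      ((k P)^3*(k Q) + (k P)*(k Q)^3 - 2*(k P)^2*(k Q)^2 + 8*(k P)*(k Q)
        - 3*(k P)^2 - 3*(k Q)^2 + k P + k Q - 4) := by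
    have hswap : D = ∑ P : X, ∑ Q : X,
        (((k Q)^3 + 3*(k Q)^2 + 6*(k Q) + 5) * (k P)
          - ((k Q)^2 + 2*(k Q) + 2) * ((k P)^2 + (k P) + 1)) := by
      rw [hD]; exact Finset.sum_comm
    rw [two_mul]
    nth_rewrite 2 [hswap]
    rw [hD, ← Finset.sum_add_distrib]
    apply Finset.sum_congr rfl
    intro P _
    rw [← Finset.sum_add_distrib]
    apply Finset.sum_congr rfl
    intro Q _
    rw [hconv]
  have hWpos : 0 < ∑ P : X, ∑ Q : X,
      ((k P)^3*(k Q) + (k P)*(k Q)^3 - 2*(k P)^2*(k Q)^2 + 8*(k P)*(k Q)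
        - 3*(k P)^2 - 3*(k Q)^2 + k P + k Q - 4) := by
    have hbotk : k (⊥ : X) = (m : ℤ) := by
      show (((⊥ : Finpartition (univ : Finset (Fin m))).parts.card : ℕ) : ℤ) = (m : ℤ)
      rw [Finpartition.card_bot, Finset.card_univ, Fintype.card_fin]
    apply Finset.sum_pos'
    · intro P _
      exact Finset.sum_nonneg fun Q _ => Wnonneg _ _ (hk1 P) (hk1 Q)
    · refine ⟨⊥, mem_univ _, Finset.sum_pos' (fun Q _ => Wnonneg _ _ (hk1 ⊥) (hk1 Q))
        ⟨⊥, mem_univ _, ?_⟩⟩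
      rw [hbotk]
      have : (2:ℤ) ≤ (m:ℤ) := by exact_mod_cast hm
      nlinarith
  rw [hprod]
  linarith [hdouble, hWpos]

end BellStmt12


/-- For all `n ≥ 4`, `B_{n+1}(B_{n-1} - B_{n-2}) > B_n(B_n - B_{n-1})`. -/
theorem stmt_12 (n : ℕ) (hn : 4 ≤ n) :
    (bell (n + 1) : ℤ) * ((bell (n - 1) : ℤ) - bell (n - 2)) >
      (bell n : ℤ) * ((bell n : ℤ) - bell (n - 1)) := by
  exact BellStmt12.final n hn
end

section
/- For all n ≥ 3 and p ≥ 0, B(C_n ∪ (p+2)K_1) = B(H_{n,2} ∪ pK_1) + 2·B(H_{n,1} ∪ pK_1) + B(H_{n,0} ∪ pK_1) and T(C_n ∪ (p+2)K_1) = T(H_{n,2} ∪ pK_1) + 2·T(H_{n,1} ∪ pK_1) + T(H_{n,0} ∪ pK_1). -/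
open Finset SimpleGraph

set_option linter.unusedSectionVars false

section Aux

open scoped Classical

variable {α : Type*} [Fintype α] [DecidableEq α] {β : Type*} [Fintype β] [DecidableEq β]

lemma part_eq_part_iff (P : Finpartition (univ : Finset α)) (x y : α) :
    P.part x = P.part y ↔ y ∈ P.part x := by
  constructor
  · intro h
    exact (P.mem_part_iff_part_eq_part (mem_univ y) (mem_univ x)).2 h.symm
  · intro h
    exact ((P.mem_part_iff_part_eq_part (mem_univ y) (mem_univ x)).1 h).symm

lemma mem_parts_iff (P : Finpartition (univ : Finset α)) (t : Finset α) :
    t ∈ P.parts ↔ ∃ a, P.part a = t := by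
  constructor
  · intro ht
    obtain ⟨a, ha⟩ := P.nonempty_of_mem_parts ht
    exact ⟨a, P.part_eq_of_mem ht ha⟩
  · rintro ⟨a, rfl⟩
    exact P.part_mem.2 (mem_univ a)

lemma part_funext (P Q : Finpartition (univ : Finset α)) (h : ∀ a, P.part a = Q.part a) :
    P = Q := by
  ext t
  rw [mem_parts_iff, mem_parts_iff]
  simp_rw [h]

/-- Pull back a partition along a map. -/
noncomputable def pullPart (g : α → β) (Q : Finpartition (univ : Finset β)) :
    Finpartition (univ : Finset α) :=
  Finpartition.ofSetoid ⟨fun x y => Q.part (g x) = Q.part (g y),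
    ⟨fun _ => rfl, Eq.symm, Eq.trans⟩⟩

lemma mem_part_pullPart (g : α → β) (Q : Finpartition (univ : Finset β)) (x y : α) :
    y ∈ (pullPart g Q).part x ↔ Q.part (g x) = Q.part (g y) :=
  Finpartition.mem_part_ofSetoid_iff_rel

lemma pullPart_part_eq_iff (g : α → β) (Q : Finpartition (univ : Finset β)) (x y : α) :
    (pullPart g Q).part x = (pullPart g Q).part y ↔ Q.part (g x) = Q.part (g y) := by
  rw [part_eq_part_iff, mem_part_pullPart]

lemma pullPart_pullPart (f : β → α) (g : α → β) (hgf : ∀ b, g (f b) = b)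
    (Q : Finpartition (univ : Finset β)) : pullPart f (pullPart g Q) = Q := by
  apply part_funext
  intro a
  ext b
  rw [mem_part_pullPart, pullPart_part_eq_iff, hgf, hgf, part_eq_part_iff]

lemma pullPart_pullPart_self (f : β → α) (g : α → β) (P : Finpartition (univ : Finset α))
    (hC : ∀ x, P.part x = P.part (f (g x))) : pullPart g (pullPart f P) = P := by
  apply part_funext
  intro a
  ext b
  rw [mem_part_pullPart, pullPart_part_eq_iff, ← hC, ← hC, part_eq_part_iff]

lemma image_part_pullPart (g : α → β) (f : β → α) (hgf : ∀ b, g (f b) = b)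
    (Q : Finpartition (univ : Finset β)) (x : α) :
    ((pullPart g Q).part x).image g = Q.part (g x) := by
  ext c
  simp only [mem_image]
  constructor
  · rintro ⟨y, hy, rfl⟩
    rw [mem_part_pullPart] at hy
    rw [← part_eq_part_iff]
    exact hy
  · intro hc
    refine ⟨f c, ?_, hgf c⟩
    rw [mem_part_pullPart, hgf]
    rw [part_eq_part_iff]
    exact hc

lemma card_parts_pullPart (g : α → β) (f : β → α) (hgf : ∀ b, g (f b) = b)
    (Q : Finpartition (univ : Finset β)) :
    (pullPart g Q).parts.card = Q.parts.card := by
  refine Finset.card_bij' (fun t _ => t.image g)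
    (fun u _ => univ.filter (fun y => g y ∈ u)) ?_ ?_ ?_ ?_
  · intro t ht
    rw [mem_parts_iff] at ht
    obtain ⟨x, rfl⟩ := ht
    rw [image_part_pullPart g f hgf]
    exact Q.part_mem.2 (mem_univ _)
  · intro u hu
    rw [mem_parts_iff] at hu
    obtain ⟨b, rfl⟩ := hu
    have : univ.filter (fun y => g y ∈ Q.part b) = (pullPart g Q).part (f b) := by
      ext y
      simp only [mem_filter, mem_univ, true_and, mem_part_pullPart, hgf]
      rw [part_eq_part_iff]
    rw [this, mem_parts_iff]
    exact ⟨f b, rfl⟩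
  · intro t ht
    rw [mem_parts_iff] at ht
    obtain ⟨x, rfl⟩ := ht
    ext y
    simp only [mem_filter, mem_univ, true_and, mem_image]
    constructor
    · rintro ⟨z, hz, hzy⟩
      rw [mem_part_pullPart] at hz ⊢
      rw [hz, hzy]
    · intro hy
      exact ⟨y, hy, rfl⟩
  · intro u hu
    rw [mem_parts_iff] at hu
    obtain ⟨b, rfl⟩ := hu
    have : univ.filter (fun y => g y ∈ Q.part b) = (pullPart g Q).part (f b) := by
      ext y
      simp only [mem_filter, mem_univ, true_and, mem_part_pullPart, hgf]
      rw [part_eq_part_iff]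
    rw [this, image_part_pullPart g f hgf, hgf]

lemma isStable_iff (G : SimpleGraph α) (P : Finpartition (univ : Finset α)) :
    IsStablePartition G P ↔ ∀ x y : α, P.part x = P.part y → ¬ G.Adj x y := by
  constructor
  · intro h x y hxy
    refine h (P.part x) (P.part_mem.2 (mem_univ x)) x (P.mem_part (mem_univ x)) y ?_
    rw [← part_eq_part_iff]
    exact hxy
  · intro h t ht u hu v hv
    have h1 : P.part u = t := P.part_eq_of_mem ht hu
    have h2 : P.part v = t := P.part_eq_of_mem ht hv
    exact h u v (h1.trans h2.symm)

end Aux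

section Aux2

open scoped Classical

variable {α : Type*} [Fintype α] [DecidableEq α] {β : Type*} [Fintype β] [DecidableEq β]

lemma transfer_cond (G : SimpleGraph α) (H : SimpleGraph β) (f : β → α) (g : α → β)
    (hgf : ∀ b, g (f b) = b)
    (hGH : ∀ x y, G.Adj x y → H.Adj (g x) (g y))
    (hHG : ∀ a b, H.Adj a b → G.Adj (f a) (f b)) (φ : ℕ → ℕ) :
    ∑ P ∈ univ.filter (fun P : Finpartition (univ : Finset α) =>
        IsStablePartition G P ∧ ∀ x, P.part x = P.part (f (g x))), φ P.parts.card
    = ∑ Q ∈ univ.filter (fun Q : Finpartition (univ : Finset β) =>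
        IsStablePartition H Q), φ Q.parts.card := by
  refine Finset.sum_bij' (fun P _ => pullPart f P) (fun Q _ => pullPart g Q) ?_ ?_ ?_ ?_ ?_
  · intro P hP
    rw [mem_filter] at hP ⊢
    obtain ⟨-, hst, -⟩ := hP
    refine ⟨mem_univ _, ?_⟩
    rw [isStable_iff] at hst ⊢
    intro a b hab hadj
    rw [pullPart_part_eq_iff] at hab
    exact hst _ _ hab (hHG a b hadj)
  · intro Q hQ
    rw [mem_filter] at hQ ⊢
    obtain ⟨-, hst⟩ := hQ
    refine ⟨mem_univ _, ?_, ?_⟩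
    · rw [isStable_iff] at hst ⊢
      intro x y hxy hadj
      rw [pullPart_part_eq_iff] at hxy
      exact hst _ _ hxy (hGH x y hadj)
    · intro x
      rw [pullPart_part_eq_iff, hgf]
  · intro P hP
    rw [mem_filter] at hP
    exact pullPart_pullPart_self f g P hP.2.2
  · intro Q hQ
    exact pullPart_pullPart f g hgf Q
  · intro P hP
    rw [mem_filter] at hP
    congr 1
    have h1 := card_parts_pullPart g f hgf (pullPart f P)
    rw [pullPart_pullPart_self f g P hP.2.2] at h1
    exact h1

lemma transfer_iso (G : SimpleGraph α) (H : SimpleGraph β) (f : β → α) (g : α → β)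
    (hgf : ∀ b, g (f b) = b) (hfg : ∀ x, f (g x) = x)
    (hGH : ∀ x y, G.Adj x y → H.Adj (g x) (g y))
    (hHG : ∀ a b, H.Adj a b → G.Adj (f a) (f b)) (φ : ℕ → ℕ) :
    ∑ P ∈ univ.filter (fun P : Finpartition (univ : Finset α) =>
        IsStablePartition G P), φ P.parts.card
    = ∑ Q ∈ univ.filter (fun Q : Finpartition (univ : Finset β) =>
        IsStablePartition H Q), φ Q.parts.card := by
  rw [← transfer_cond G H f g hgf hGH hHG φ]
  congr 1
  apply Finset.filter_congr
  intro P _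
  constructor
  · intro h
    exact ⟨h, fun x => by rw [hfg]⟩
  · exact fun h => h.1

/-- `G` plus a pendant vertex attached at `w`. -/
def addPend {V : Type*} (G : SimpleGraph V) (w : V) : SimpleGraph (V ⊕ Fin 1) :=
  SimpleGraph.fromRel (fun x y =>
    (∃ a b, x = Sum.inl a ∧ y = Sum.inl b ∧ G.Adj a b) ∨ (x = Sum.inl w ∧ y = Sum.inr 0))

lemma unionIsolated_one_adj {V : Type*} (G : SimpleGraph V) (x y : V ⊕ Fin 1) :
    (unionIsolated G 1).Adj x y ↔ ∃ a b, x = Sum.inl a ∧ y = Sum.inl b ∧ G.Adj a b := by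
  rw [unionIsolated, SimpleGraph.fromRel_adj]
  constructor
  · rintro ⟨hne, ⟨a, b, rfl, rfl, h⟩ | ⟨a, b, rfl, rfl, h⟩⟩
    · exact ⟨a, b, rfl, rfl, h⟩
    · exact ⟨b, a, rfl, rfl, h.symm⟩
  · rintro ⟨a, b, rfl, rfl, h⟩
    exact ⟨by simp [h.ne], Or.inl ⟨a, b, rfl, rfl, h⟩⟩

lemma addPend_adj {V : Type*} (G : SimpleGraph V) (w : V) (x y : V ⊕ Fin 1) :
    (addPend G w).Adj x y ↔ (∃ a b, x = Sum.inl a ∧ y = Sum.inl b ∧ G.Adj a b) ∨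
      (x = Sum.inl w ∧ y = Sum.inr 0) ∨ (y = Sum.inl w ∧ x = Sum.inr 0) := by
  rw [addPend, SimpleGraph.fromRel_adj]
  constructor
  · rintro ⟨hne, (⟨a, b, rfl, rfl, h⟩ | ⟨rfl, rfl⟩) | (⟨a, b, rfl, rfl, h⟩ | ⟨rfl, rfl⟩)⟩
    · exact Or.inl ⟨a, b, rfl, rfl, h⟩
    · exact Or.inr (Or.inl ⟨rfl, rfl⟩)
    · exact Or.inl ⟨b, a, rfl, rfl, h.symm⟩
    · exact Or.inr (Or.inr ⟨rfl, rfl⟩)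
  · rintro (⟨a, b, rfl, rfl, h⟩ | ⟨rfl, rfl⟩ | ⟨rfl, rfl⟩)
    · exact ⟨by simp [h.ne], Or.inl (Or.inl ⟨a, b, rfl, rfl, h⟩)⟩
    · exact ⟨by simp, Or.inl (Or.inr ⟨rfl, rfl⟩)⟩
    · exact ⟨by simp, Or.inr (Or.inr ⟨rfl, rfl⟩)⟩

lemma step_lemma {V : Type*} [Fintype V] [DecidableEq V] (G : SimpleGraph V) (w : V)
    (φ : ℕ → ℕ) :
    ∑ P ∈ univ.filter (fun P : Finpartition (univ : Finset (V ⊕ Fin 1)) =>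
        IsStablePartition (unionIsolated G 1) P), φ P.parts.card
    = ∑ P ∈ univ.filter (fun P : Finpartition (univ : Finset (V ⊕ Fin 1)) =>
        IsStablePartition (addPend G w) P), φ P.parts.card
      + ∑ Q ∈ univ.filter (fun Q : Finpartition (univ : Finset V) =>
        IsStablePartition G Q), φ Q.parts.card := by
  classical
  let f : V → V ⊕ Fin 1 := Sum.inl
  let g : V ⊕ Fin 1 → V := Sum.elim id (fun _ => w)
  have hgf : ∀ b, g (f b) = b := fun b => rfl
  rw [← Finset.sum_filter_add_sum_filter_not
      (univ.filter (fun P => IsStablePartition (unionIsolated G 1) P))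
      (fun P => ∀ x, P.part x = P.part (f (g x))), add_comm]
  congr 1
  · -- the ¬C side equals the addPend side
    rw [Finset.filter_filter]
    apply Finset.sum_congr _ (fun _ _ => rfl)
    apply Finset.filter_congr
    intro P _
    constructor
    · rintro ⟨hst, hnc⟩
      have hne : P.part (Sum.inl w) ≠ P.part (Sum.inr 0) := by
        intro heq
        apply hnc
        intro x
        rcases x with a | i
        · rfl
        · have : i = 0 := Subsingleton.elim i 0
          subst this
          exact heq.symm
      rw [isStable_iff] at hst ⊢
      intro x y hxy hadj
      rw [addPend_adj] at hadj
      rcases hadj with ⟨a, b, rfl, rfl, h⟩ | ⟨rfl, rfl⟩ | ⟨rfl, rfl⟩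
      · exact hst _ _ hxy ((unionIsolated_one_adj G _ _).2 ⟨a, b, rfl, rfl, h⟩)
      · exact hne hxy
      · exact hne hxy.symm
    · intro hst
      constructor
      · rw [isStable_iff] at hst ⊢
        intro x y hxy hadj
        rw [unionIsolated_one_adj] at hadj
        obtain ⟨a, b, rfl, rfl, h⟩ := hadj
        exact hst _ _ hxy ((addPend_adj G w _ _).2 (Or.inl ⟨a, b, rfl, rfl, h⟩))
      · intro hcond
        have h0 := hcond (Sum.inr 0)
        rw [isStable_iff] at hst
        exact hst _ _ h0.symm ((addPend_adj G w _ _).2 (Or.inr (Or.inl ⟨rfl, rfl⟩)))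
  · -- the C side equals the plain G side
    rw [Finset.filter_filter]
    refine transfer_cond (unionIsolated G 1) G f g hgf ?_ ?_ φ
    · intro x y hadj
      rw [unionIsolated_one_adj] at hadj
      obtain ⟨a, b, rfl, rfl, h⟩ := hadj
      exact h
    · intro a b hadj
      exact (unionIsolated_one_adj G _ _).2 ⟨a, b, rfl, rfl, hadj⟩

end Aux2

section Concrete

open scoped Classical

variable {V : Type*} [Fintype V] [DecidableEq V]

noncomputable def colSum (G : SimpleGraph V) (φ : ℕ → ℕ) : ℕ :=
  ∑ P ∈ univ.filter (fun P : Finpartition (univ : Finset V) => IsStablePartition G P),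
    φ P.parts.card

lemma colSum_eq_of_maps {α : Type*} [Fintype α] [DecidableEq α] {β : Type*} [Fintype β]
    [DecidableEq β] (G : SimpleGraph α) (H : SimpleGraph β) (f : β → α) (g : α → β)
    (hgf : ∀ b, g (f b) = b) (hfg : ∀ x, f (g x) = x)
    (hGH : ∀ x y, G.Adj x y → H.Adj (g x) (g y))
    (hHG : ∀ a b, H.Adj a b → G.Adj (f a) (f b)) (φ : ℕ → ℕ) :
    colSum G φ = colSum H φ :=
  transfer_iso G H f g hgf hfg hGH hHG φ

lemma colSum_step (G : SimpleGraph V) (w : V) (φ : ℕ → ℕ) :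
    colSum (unionIsolated G 1) φ = colSum (addPend G w) φ + colSum G φ :=
  step_lemma G w φ

lemma unionIsolated_adj {p : ℕ} (G : SimpleGraph V) (x y : V ⊕ Fin p) :
    (unionIsolated G p).Adj x y ↔ ∃ a b, x = Sum.inl a ∧ y = Sum.inl b ∧ G.Adj a b := by
  rw [unionIsolated, SimpleGraph.fromRel_adj]
  constructor
  · rintro ⟨hne, ⟨a, b, rfl, rfl, h⟩ | ⟨a, b, rfl, rfl, h⟩⟩
    · exact ⟨a, b, rfl, rfl, h⟩
    · exact ⟨b, a, rfl, rfl, h.symm⟩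
  · rintro ⟨a, b, rfl, rfl, h⟩
    exact ⟨by simp [h.ne], Or.inl ⟨a, b, rfl, rfl, h⟩⟩

lemma Hgraph_adj_zero {n : ℕ} (x y : Fin n ⊕ Fin 0) :
    (Hgraph n 0).Adj x y ↔ ∃ a b, x = Sum.inl a ∧ y = Sum.inl b ∧ (cycleGraph n).Adj a b := by
  rw [Hgraph, SimpleGraph.fromRel_adj]
  constructor
  · rintro ⟨hne, h | h⟩ <;>
      rcases h with ⟨a, b, rfl, rfl, h⟩ | ⟨a, b, rfl, rfl, h⟩ | ⟨a, b, h0, hb0, rfl, rfl⟩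
    · exact ⟨a, b, rfl, rfl, h⟩
    · exact a.elim0
    · exact b.elim0
    · exact ⟨b, a, rfl, rfl, h.symm⟩
    · exact a.elim0
    · exact b.elim0
  · rintro ⟨a, b, rfl, rfl, h⟩
    exact ⟨by simp [h.ne], Or.inl (Or.inl ⟨a, b, rfl, rfl, h⟩)⟩

lemma Hgraph_adj_one {n : ℕ} (x y : Fin n ⊕ Fin 1) :
    (Hgraph n 1).Adj x y ↔ (∃ a b, x = Sum.inl a ∧ y = Sum.inl b ∧ (cycleGraph n).Adj a b) ∨
      (∃ a : Fin n, a.val = 0 ∧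
        ((x = Sum.inl a ∧ y = Sum.inr 0) ∨ (y = Sum.inl a ∧ x = Sum.inr 0))) := by
  rw [Hgraph, SimpleGraph.fromRel_adj]
  constructor
  · rintro ⟨hne, h | h⟩ <;>
      rcases h with ⟨a, b, rfl, rfl, h⟩ | ⟨a, b, rfl, rfl, h⟩ | ⟨a, b, h0, hb0, rfl, rfl⟩
    · exact Or.inl ⟨a, b, rfl, rfl, h⟩
    · rw [pathGraph_adj] at h
      have := a.isLt; have := b.isLt; omega
    · have hb : b = 0 := Subsingleton.elim b 0
      subst hb
      exact Or.inr ⟨a, h0, Or.inl ⟨rfl, rfl⟩⟩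
    · exact Or.inl ⟨b, a, rfl, rfl, h.symm⟩
    · rw [pathGraph_adj] at h
      have := a.isLt; have := b.isLt; omega
    · have hb : b = 0 := Subsingleton.elim b 0
      subst hb
      exact Or.inr ⟨a, h0, Or.inr ⟨rfl, rfl⟩⟩
  · rintro (⟨a, b, rfl, rfl, h⟩ | ⟨a, h0, ⟨rfl, rfl⟩ | ⟨rfl, rfl⟩⟩)
    · exact ⟨by simp [h.ne], Or.inl (Or.inl ⟨a, b, rfl, rfl, h⟩)⟩
    · exact ⟨by simp, Or.inl (Or.inr (Or.inr ⟨a, 0, h0, rfl, rfl, rfl⟩))⟩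
    · exact ⟨by simp, Or.inr (Or.inr (Or.inr ⟨a, 0, h0, rfl, rfl, rfl⟩))⟩

lemma Hgraph_adj_two {n : ℕ} (x y : Fin n ⊕ Fin 2) :
    (Hgraph n 2).Adj x y ↔ (∃ a b, x = Sum.inl a ∧ y = Sum.inl b ∧ (cycleGraph n).Adj a b) ∨
      ((x = Sum.inr 0 ∧ y = Sum.inr 1) ∨ (x = Sum.inr 1 ∧ y = Sum.inr 0)) ∨
      (∃ a : Fin n, a.val = 0 ∧
        ((x = Sum.inl a ∧ y = Sum.inr 0) ∨ (y = Sum.inl a ∧ x = Sum.inr 0))) := by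
  rw [Hgraph, SimpleGraph.fromRel_adj]
  constructor
  · rintro ⟨hne, h | h⟩ <;>
      rcases h with ⟨a, b, rfl, rfl, h⟩ | ⟨a, b, rfl, rfl, h⟩ | ⟨a, b, h0, hb0, rfl, rfl⟩
    · exact Or.inl ⟨a, b, rfl, rfl, h⟩
    · rw [pathGraph_adj] at h
      have ha := a.isLt; have hb := b.isLt
      rcases h with h | h
      · have ha0 : a = 0 := by apply Fin.ext; simp; omega
        have hb1 : b = 1 := by apply Fin.ext; simp; omega
        subst ha0; subst hb1
        exact Or.inr (Or.inl (Or.inl ⟨rfl, rfl⟩))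
      · have ha0 : a = 1 := by apply Fin.ext; simp; omega
        have hb1 : b = 0 := by apply Fin.ext; simp; omega
        subst ha0; subst hb1
        exact Or.inr (Or.inl (Or.inr ⟨rfl, rfl⟩))
    · have hb : b = 0 := by apply Fin.ext; simpa using hb0
      subst hb
      exact Or.inr (Or.inr ⟨a, h0, Or.inl ⟨rfl, rfl⟩⟩)
    · exact Or.inl ⟨b, a, rfl, rfl, h.symm⟩
    · rw [pathGraph_adj] at h
      have ha := a.isLt; have hb := b.isLt
      rcases h with h | h
      · have ha0 : a = 0 := by apply Fin.ext; simp; omega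
        have hb1 : b = 1 := by apply Fin.ext; simp; omega
        subst ha0; subst hb1
        exact Or.inr (Or.inl (Or.inr ⟨rfl, rfl⟩))
      · have ha0 : a = 1 := by apply Fin.ext; simp; omega
        have hb1 : b = 0 := by apply Fin.ext; simp; omega
        subst ha0; subst hb1
        exact Or.inr (Or.inl (Or.inl ⟨rfl, rfl⟩))
    · have hb : b = 0 := by apply Fin.ext; simpa using hb0
      subst hb
      exact Or.inr (Or.inr ⟨a, h0, Or.inr ⟨rfl, rfl⟩⟩)
  · rintro (⟨a, b, rfl, rfl, h⟩ | (⟨rfl, rfl⟩ | ⟨rfl, rfl⟩) | ⟨a, h0, ⟨rfl, rfl⟩ | ⟨rfl, rfl⟩⟩)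
    · exact ⟨by simp [h.ne], Or.inl (Or.inl ⟨a, b, rfl, rfl, h⟩)⟩
    · refine ⟨by simp, Or.inl (Or.inr (Or.inl ⟨0, 1, rfl, rfl, ?_⟩))⟩
      rw [pathGraph_adj]; simp
    · refine ⟨by simp, Or.inr (Or.inr (Or.inl ⟨0, 1, rfl, rfl, ?_⟩))⟩
      rw [pathGraph_adj]; simp
    · exact ⟨by simp, Or.inl (Or.inr (Or.inr ⟨a, 0, h0, rfl, rfl, rfl⟩))⟩
    · exact ⟨by simp, Or.inr (Or.inr (Or.inr ⟨a, 0, h0, rfl, rfl, rfl⟩))⟩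

end Concrete


open scoped Classical in
lemma colB_eq_colSum {V : Type*} [Fintype V] [DecidableEq V] (G : SimpleGraph V) :
    colB G = colSum G (fun _ => 1) :=
  Finset.card_eq_sum_ones _

open scoped Classical in
lemma colT_eq_colSum {V : Type*} [Fintype V] [DecidableEq V] (G : SimpleGraph V) :
    colT G = colSum G (fun k => k) := rfl

set_option maxHeartbeats 1000000

/-- For all `n ≥ 3` and `p ≥ 0`,
`B(C_n ∪ (p+2)K₁) = B(H_{n,2} ∪ pK₁) + 2 B(H_{n,1} ∪ pK₁) + B(H_{n,0} ∪ pK₁)` and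
`T(C_n ∪ (p+2)K₁) = T(H_{n,2} ∪ pK₁) + 2 T(H_{n,1} ∪ pK₁) + T(H_{n,0} ∪ pK₁)`. -/
theorem stmt_18 (n p : ℕ) (hn : 3 ≤ n) :
    colB (unionIsolated (cycleGraph n) (p + 2)) =
      colB (unionIsolated (Hgraph n 2) p) + 2 * colB (unionIsolated (Hgraph n 1) p) +
        colB (unionIsolated (Hgraph n 0) p) ∧
    colT (unionIsolated (cycleGraph n) (p + 2)) =
      colT (unionIsolated (Hgraph n 2) p) + 2 * colT (unionIsolated (Hgraph n 1) p) +
        colT (unionIsolated (Hgraph n 0) p) := by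
  have hn0 : 0 < n := by omega
  have key : ∀ φ : ℕ → ℕ,
      colSum (unionIsolated (cycleGraph n) (p + 2)) φ =
        colSum (unionIsolated (Hgraph n 2) p) φ + 2 * colSum (unionIsolated (Hgraph n 1) p) φ +
          colSum (unionIsolated (Hgraph n 0) p) φ := by
    intro φ
    -- Step α : big graph ≃ unionIsolated (unionIsolated A 1) 1
    have hα : colSum (unionIsolated (cycleGraph n) (p + 2)) φ =
        colSum (unionIsolated (unionIsolated (unionIsolated (cycleGraph n) p) 1) 1) φ := by
      refine colSum_eq_of_maps _ _
        (Sum.elim (Sum.elim (Sum.elim (fun a => Sum.inl a) (fun j => Sum.inr ⟨j.1, by omega⟩))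
          (fun _ => Sum.inr ⟨p, by omega⟩)) (fun _ => Sum.inr ⟨p + 1, by omega⟩))
        (Sum.elim (fun a => Sum.inl (Sum.inl (Sum.inl a)))
          (fun i => if h : i.1 < p then Sum.inl (Sum.inl (Sum.inr ⟨i.1, h⟩))
            else if i.1 = p then Sum.inl (Sum.inr 0) else Sum.inr 0)) ?_ ?_ ?_ ?_ φ
      · rintro ((((a | j) | i) | i))
        · rfl
        · simp [j.isLt]
        · have hi : i = 0 := Subsingleton.elim i 0
          subst hi
          simp
        · have hi : i = 0 := Subsingleton.elim i 0
          subst hi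
          have hlt : ¬ (p + 1 < p) := by omega
          simp [hlt]
      · rintro (a | i)
        · rfl
        · by_cases h1 : i.1 < p
          · simp [h1]
          · by_cases h2 : i.1 = p
            · simp [h1, h2, Fin.ext_iff]
            · have := i.isLt
              simp [h1, h2, Fin.ext_iff]
              omega
      · intro x y h
        rw [unionIsolated_adj] at h
        obtain ⟨a, b, rfl, rfl, hab⟩ := h
        exact (unionIsolated_adj _ _ _).2 ⟨_, _, rfl, rfl,
          (unionIsolated_adj _ _ _).2 ⟨_, _, rfl, rfl,
            (unionIsolated_adj _ _ _).2 ⟨a, b, rfl, rfl, hab⟩⟩⟩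
      · intro c d h
        rw [unionIsolated_adj] at h
        obtain ⟨c', d', rfl, rfl, h⟩ := h
        rw [unionIsolated_adj] at h
        obtain ⟨c'', d'', rfl, rfl, h⟩ := h
        rw [unionIsolated_adj] at h
        obtain ⟨a, b, rfl, rfl, hab⟩ := h
        exact (unionIsolated_adj _ _ _).2 ⟨a, b, rfl, rfl, hab⟩
    -- Step ε
    have hε : colSum (addPend (unionIsolated (unionIsolated (cycleGraph n) p) 1)
          (Sum.inl (Sum.inl ⟨0, hn0⟩))) φ =
        colSum (unionIsolated (addPend (unionIsolated (cycleGraph n) p)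
          (Sum.inl ⟨0, hn0⟩)) 1) φ := by
      refine colSum_eq_of_maps _ _
        (Sum.elim (Sum.elim (fun v => Sum.inl (Sum.inl v)) (fun i => Sum.inr i))
          (fun i => Sum.inl (Sum.inr i)))
        (Sum.elim (Sum.elim (fun v => Sum.inl (Sum.inl v)) (fun i => Sum.inr i))
          (fun i => Sum.inl (Sum.inr i))) ?_ ?_ ?_ ?_ φ
      · rintro (((v | i) | i)) <;> rfl
      · rintro (((v | i) | i)) <;> rfl
      · intro x y h
        rw [addPend_adj] at h
        rcases h with ⟨c, d, rfl, rfl, hI⟩ | ⟨rfl, rfl⟩ | ⟨rfl, rfl⟩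
        · rw [unionIsolated_adj] at hI
          obtain ⟨e, e', rfl, rfl, hA⟩ := hI
          exact (unionIsolated_adj _ _ _).2 ⟨_, _, rfl, rfl,
            (addPend_adj _ _ _ _).2 (Or.inl ⟨e, e', rfl, rfl, hA⟩)⟩
        · exact (unionIsolated_adj _ _ _).2 ⟨_, _, rfl, rfl,
            (addPend_adj _ _ _ _).2 (Or.inr (Or.inl ⟨rfl, rfl⟩))⟩
        · exact ((unionIsolated_adj _ _ _).2 ⟨_, _, rfl, rfl,
            (addPend_adj _ _ _ _).2 (Or.inr (Or.inl ⟨rfl, rfl⟩))⟩).symm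
      · intro c d h
        rw [unionIsolated_adj] at h
        obtain ⟨c', d', rfl, rfl, hP⟩ := h
        rw [addPend_adj] at hP
        rcases hP with ⟨e, e', rfl, rfl, hA⟩ | ⟨rfl, rfl⟩ | ⟨rfl, rfl⟩
        · exact (addPend_adj _ _ _ _).2 (Or.inl ⟨_, _, rfl, rfl,
            (unionIsolated_adj _ _ _).2 ⟨e, e', rfl, rfl, hA⟩⟩)
        · exact (addPend_adj _ _ _ _).2 (Or.inr (Or.inl ⟨rfl, rfl⟩))
        · exact (addPend_adj _ _ _ _).2 (Or.inr (Or.inr ⟨rfl, rfl⟩))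
    -- Step β
    have hβ : colSum (unionIsolated (Hgraph n 2) p) φ =
        colSum (addPend (addPend (unionIsolated (cycleGraph n) p) (Sum.inl ⟨0, hn0⟩))
          (Sum.inr 0)) φ := by
      refine colSum_eq_of_maps _ _
        (Sum.elim (Sum.elim (Sum.elim (fun a => Sum.inl (Sum.inl a)) (fun j => Sum.inr j))
          (fun _ => Sum.inl (Sum.inr 0))) (fun _ => Sum.inl (Sum.inr 1)))
        (Sum.elim (Sum.elim (fun a => Sum.inl (Sum.inl (Sum.inl a)))
          (fun i : Fin 2 => if i = 0 then Sum.inl (Sum.inr 0) else Sum.inr 0))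
          (fun j => Sum.inl (Sum.inl (Sum.inr j)))) ?_ ?_ ?_ ?_ φ
      · rintro (((a | j) | i) | i)
        · rfl
        · rfl
        · have hi : i = 0 := Subsingleton.elim i 0
          subst hi
          simp
        · have hi : i = 0 := Subsingleton.elim i 0
          subst hi
          simp
      · rintro ((a | i) | j)
        · rfl
        · by_cases h : i = 0
          · subst h; simp
          · have h1 : i = 1 := by omega
            subst h1
            simp
        · rfl
      · intro x y h
        rw [unionIsolated_adj] at h
        obtain ⟨c, d, rfl, rfl, h2⟩ := h
        rw [Hgraph_adj_two] at h2
        rcases h2 with ⟨a, b, rfl, rfl, hab⟩ | (⟨rfl, rfl⟩ | ⟨rfl, rfl⟩) |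
          ⟨a, h0, ⟨rfl, rfl⟩ | ⟨rfl, rfl⟩⟩
        · exact (addPend_adj _ _ _ _).2 (Or.inl ⟨_, _, rfl, rfl,
            (addPend_adj _ _ _ _).2 (Or.inl ⟨_, _, rfl, rfl,
              (unionIsolated_adj _ _ _).2 ⟨a, b, rfl, rfl, hab⟩⟩)⟩)
        · exact (addPend_adj _ _ _ _).2 (Or.inr (Or.inl ⟨rfl, rfl⟩))
        · exact ((addPend_adj _ _ _ _).2 (Or.inr (Or.inl ⟨rfl, rfl⟩))).symm
        · have ha : a = ⟨0, hn0⟩ := Fin.ext (by simpa using h0)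
          subst ha
          exact (addPend_adj _ _ _ _).2 (Or.inl ⟨_, _, rfl, rfl,
            (addPend_adj _ _ _ _).2 (Or.inr (Or.inl ⟨rfl, rfl⟩))⟩)
        · have ha : a = ⟨0, hn0⟩ := Fin.ext (by simpa using h0)
          subst ha
          exact ((addPend_adj _ _ _ _).2 (Or.inl ⟨_, _, rfl, rfl,
            (addPend_adj _ _ _ _).2 (Or.inr (Or.inl ⟨rfl, rfl⟩))⟩)).symm
      · intro c d h
        rw [addPend_adj] at h
        rcases h with ⟨c', d', rfl, rfl, hP⟩ | ⟨rfl, rfl⟩ | ⟨rfl, rfl⟩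
        · rw [addPend_adj] at hP
          rcases hP with ⟨e, e', rfl, rfl, hA⟩ | ⟨rfl, rfl⟩ | ⟨rfl, rfl⟩
          · rw [unionIsolated_adj] at hA
            obtain ⟨a, b, rfl, rfl, hab⟩ := hA
            exact (unionIsolated_adj _ _ _).2 ⟨_, _, rfl, rfl,
              (Hgraph_adj_two _ _).2 (Or.inl ⟨a, b, rfl, rfl, hab⟩)⟩
          · exact (unionIsolated_adj _ _ _).2 ⟨_, _, rfl, rfl,
              (Hgraph_adj_two _ _).2 (Or.inr (Or.inr ⟨⟨0, hn0⟩, rfl, Or.inl ⟨rfl, rfl⟩⟩))⟩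
          · exact (unionIsolated_adj _ _ _).2 ⟨_, _, rfl, rfl,
              (Hgraph_adj_two _ _).2 (Or.inr (Or.inr ⟨⟨0, hn0⟩, rfl, Or.inr ⟨rfl, rfl⟩⟩))⟩
        · exact (unionIsolated_adj _ _ _).2 ⟨_, _, rfl, rfl,
            (Hgraph_adj_two _ _).2 (Or.inr (Or.inl (Or.inl ⟨rfl, rfl⟩)))⟩
        · exact (unionIsolated_adj _ _ _).2 ⟨_, _, rfl, rfl,
            (Hgraph_adj_two _ _).2 (Or.inr (Or.inl (Or.inr ⟨rfl, rfl⟩)))⟩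
    -- Step γ
    have hγ : colSum (unionIsolated (Hgraph n 1) p) φ =
        colSum (addPend (unionIsolated (cycleGraph n) p) (Sum.inl ⟨0, hn0⟩)) φ := by
      refine colSum_eq_of_maps _ _
        (Sum.elim (Sum.elim (fun a => Sum.inl (Sum.inl a)) (fun j => Sum.inr j))
          (fun i => Sum.inl (Sum.inr i)))
        (Sum.elim (Sum.elim (fun a => Sum.inl (Sum.inl a)) (fun i => Sum.inr i))
          (fun j => Sum.inl (Sum.inr j))) ?_ ?_ ?_ ?_ φ
      · rintro (((a | j) | i)) <;> rfl
      · rintro (((a | i) | j)) <;> rfl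
      · intro x y h
        rw [unionIsolated_adj] at h
        obtain ⟨c, d, rfl, rfl, h1⟩ := h
        rw [Hgraph_adj_one] at h1
        rcases h1 with ⟨a, b, rfl, rfl, hab⟩ | ⟨a, h0, ⟨rfl, rfl⟩ | ⟨rfl, rfl⟩⟩
        · exact (addPend_adj _ _ _ _).2 (Or.inl ⟨_, _, rfl, rfl,
            (unionIsolated_adj _ _ _).2 ⟨a, b, rfl, rfl, hab⟩⟩)
        · have ha : a = ⟨0, hn0⟩ := Fin.ext (by simpa using h0)
          subst ha
          exact (addPend_adj _ _ _ _).2 (Or.inr (Or.inl ⟨rfl, rfl⟩))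
        · have ha : a = ⟨0, hn0⟩ := Fin.ext (by simpa using h0)
          subst ha
          exact (addPend_adj _ _ _ _).2 (Or.inr (Or.inr ⟨rfl, rfl⟩))
      · intro c d h
        rw [addPend_adj] at h
        rcases h with ⟨e, e', rfl, rfl, hA⟩ | ⟨rfl, rfl⟩ | ⟨rfl, rfl⟩
        · rw [unionIsolated_adj] at hA
          obtain ⟨a, b, rfl, rfl, hab⟩ := hA
          exact (unionIsolated_adj _ _ _).2 ⟨_, _, rfl, rfl,
            (Hgraph_adj_one _ _).2 (Or.inl ⟨a, b, rfl, rfl, hab⟩)⟩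
        · exact (unionIsolated_adj _ _ _).2 ⟨_, _, rfl, rfl,
            (Hgraph_adj_one _ _).2 (Or.inr ⟨⟨0, hn0⟩, rfl, Or.inl ⟨rfl, rfl⟩⟩)⟩
        · exact (unionIsolated_adj _ _ _).2 ⟨_, _, rfl, rfl,
            (Hgraph_adj_one _ _).2 (Or.inr ⟨⟨0, hn0⟩, rfl, Or.inr ⟨rfl, rfl⟩⟩)⟩
    -- Step δ
    have hδ : colSum (unionIsolated (Hgraph n 0) p) φ =
        colSum (unionIsolated (cycleGraph n) p) φ := by
      refine colSum_eq_of_maps _ _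
        (Sum.elim (fun a => Sum.inl (Sum.inl a)) (fun j => Sum.inr j))
        (Sum.elim (Sum.elim (fun a => Sum.inl a) (fun z => z.elim0)) (fun j => Sum.inr j))
        ?_ ?_ ?_ ?_ φ
      · rintro (a | j) <;> rfl
      · rintro ((a | z) | j)
        · rfl
        · exact z.elim0
        · rfl
      · intro x y h
        rw [unionIsolated_adj] at h
        obtain ⟨c, d, rfl, rfl, h0⟩ := h
        rw [Hgraph_adj_zero] at h0
        obtain ⟨a, b, rfl, rfl, hab⟩ := h0
        exact (unionIsolated_adj _ _ _).2 ⟨a, b, rfl, rfl, hab⟩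
      · intro c d h
        rw [unionIsolated_adj] at h
        obtain ⟨a, b, rfl, rfl, hab⟩ := h
        exact (unionIsolated_adj _ _ _).2 ⟨_, _, rfl, rfl,
          (Hgraph_adj_zero _ _).2 ⟨a, b, rfl, rfl, hab⟩⟩
    have s1 := colSum_step (unionIsolated (unionIsolated (cycleGraph n) p) 1)
      (Sum.inl (Sum.inl ⟨0, hn0⟩)) φ
    have s2 := colSum_step (addPend (unionIsolated (cycleGraph n) p) (Sum.inl ⟨0, hn0⟩))
      (Sum.inr 0) φ
    have s3 := colSum_step (unionIsolated (cycleGraph n) p) (Sum.inl ⟨0, hn0⟩) φ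
    rw [hα, s1, hε, s2, s3, hβ, hγ, hδ]
    ring
  refine ⟨?_, ?_⟩
  · rw [colB_eq_colSum, colB_eq_colSum, colB_eq_colSum, colB_eq_colSum]
    exact key _
  · rw [colT_eq_colSum, colT_eq_colSum, colT_eq_colSum, colT_eq_colSum]
    exact key _
end
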